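/- arXiv:1301.2063 — 5 statements merged into one kernel-verified Lean document; each statement's English description precedes it below -/
import Mathlib

section
/- Let d > 0, λ > 0, and let f : [0,∞) → ℝ be locally Hölder continuous with inf_{x≥0} f(x) = f₀ > 0 and sup f < ∞. If u is a positive solution on (0,∞) of -d u'' = u(f(x) - λ u) with u(0) = 0, and there exists x₁ > 0 with u(x₁) > (sup f)/λ and u'(x₁) ≥ 0, then u blows up at some finite point; hence any positive solution defined on all of [0,∞) satisfies sup_{x≥0} u(x) ≤ (sup f)/λ. -/
open Set Filter

set_option maxHeartbeats 1000000 in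
/-- any positive solution of `-d u'' = u (f - λ u)` on `(0,∞)` with
`u(0) = 0`, defined on all of `[0,∞)`, satisfies `sup_{x ≥ 0} u(x) ≤ (sup f)/λ`. -/
theorem stmt0 (d lam : ℝ) (hd : 0 < d) (hlam : 0 < lam)
    (f u u' u'' : ℝ → ℝ)
    (hf_cont : ContinuousOn f (Ici 0))
    (f₀ : ℝ) (hf₀ : 0 < f₀) (hf_lb : ∀ x ∈ Ici (0:ℝ), f₀ ≤ f x)
    (hf_bdd : BddAbove (f '' Ici 0))
    (hu_cont : ContinuousOn u (Ici 0))
    (hu0 : u 0 = 0)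
    (hu_pos : ∀ x ∈ Ioi (0:ℝ), 0 < u x)
    (hu' : ∀ x ∈ Ioi (0:ℝ), HasDerivAt u (u' x) x)
    (hu'' : ∀ x ∈ Ioi (0:ℝ), HasDerivAt u' (u'' x) x)
    (hode : ∀ x ∈ Ioi (0:ℝ), -(d * u'' x) = u x * (f x - lam * u x)) :
    ∀ x ∈ Ici (0:ℝ), u x ≤ sSup (f '' Ici 0) / lam := by
  by_contra hcon
  push_neg at hcon
  obtain ⟨M, hMdef⟩ : ∃ M, M = sSup (f '' Ici 0) := ⟨_, rfl⟩
  rw [← hMdef] at hcon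
  obtain ⟨m, hm⟩ : ∃ m, m = M / lam := ⟨_, rfl⟩
  rw [← hm] at hcon
  obtain ⟨x₁, hx₁mem, hx₁⟩ := hcon
  have hfM : ∀ x, 0 ≤ x → f x ≤ M := by
    intro x hx
    rw [hMdef]
    exact le_csSup hf_bdd ⟨x, mem_Ici.mpr hx, rfl⟩
  have hMpos : 0 < M :=
    lt_of_lt_of_le hf₀ ((hf_lb 0 (mem_Ici.mpr le_rfl)).trans (hfM 0 le_rfl))
  have hmpos : 0 < m := hm ▸ div_pos hMpos hlam
  have hMm : lam * m = M := by rw [hm]; field_simp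
  -- helpers: sign of numerator from sign of quotient
  have hdiv_nonneg : ∀ A B : ℝ, 0 < B → 0 ≤ A / B → 0 ≤ A := by
    intro A B hB h
    by_contra hA
    push_neg at hA
    have := div_neg_of_neg_of_pos hA hB
    linarith
  have hdiv_pos : ∀ A B : ℝ, 0 < B → 0 < A / B → 0 < A := by
    intro A B hB h
    by_contra hA
    push_neg at hA
    have : A / B ≤ 0 := div_nonpos_of_nonpos_of_nonneg hA hB.le
    linarith
  -- u'' formula and positivity where u > m
  have hupp_eq : ∀ x, 0 < x → u'' x = u x * (lam * u x - f x) / d := by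
    intro x hx
    have h := hode x hx
    field_simp
    linarith [h]
  have hupp_pos : ∀ x, 0 < x → m < u x → 0 < u'' x := by
    intro x hx hux
    rw [hupp_eq x hx]
    have hux0 : 0 < u x := hu_pos x hx
    have hfx : f x ≤ M := hfM x hx.le
    have : M < lam * u x := by
      calc M = lam * m := hMm.symm
      _ < lam * u x := (mul_lt_mul_iff_right₀ hlam).mpr hux
    exact div_pos (mul_pos hux0 (by linarith)) hd
  -- mean value theorems
  have hMVTu : ∀ s t, 0 ≤ s → s < t →
      ∃ ξ ∈ Ioo s t, u' ξ = (u t - u s) / (t - s) := by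
    intro s t hs hst
    exact exists_hasDerivAt_eq_slope u u' hst
      (hu_cont.mono (fun y hy => hs.trans hy.1))
      (fun x hx => hu' x (lt_of_le_of_lt hs hx.1))
  have hMVTu' : ∀ s t, 0 < s → s < t →
      ∃ ξ ∈ Ioo s t, u'' ξ = (u' t - u' s) / (t - s) := by
    intro s t hs hst
    exact exists_hasDerivAt_eq_slope u' u'' hst
      (fun y hy => (hu'' y (lt_of_lt_of_le hs hy.1)).continuousAt.continuousWithinAt)
      (fun x hx => hu'' x (hs.trans hx.1))
  have hx₁pos : 0 < x₁ := by
    rcases lt_or_eq_of_le (show (0:ℝ) ≤ x₁ from hx₁mem) with h | h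
    · exact h
    · exfalso; rw [← h, hu0] at hx₁; linarith
  -- the last crossing point x₀ below x₁
  obtain ⟨S, hSdef⟩ : ∃ S : Set ℝ, S = {x | x ∈ Icc (0:ℝ) x₁ ∧ u x ≤ m} := ⟨_, rfl⟩
  have hS0 : (0:ℝ) ∈ S := by
    rw [hSdef]
    exact ⟨⟨le_rfl, hx₁pos.le⟩, by rw [hu0]; exact hmpos.le⟩
  have hSbdd : BddAbove S := ⟨x₁, fun t ht => by rw [hSdef] at ht; exact ht.1.2⟩
  obtain ⟨x₀, hx₀def⟩ : ∃ y, y = sSup S := ⟨_, rfl⟩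
  have hx₀nonneg : 0 ≤ x₀ := hx₀def ▸ le_csSup hSbdd hS0
  have hbetween : ∀ t, x₀ < t → t ≤ x₁ → m < u t := by
    intro t h1 h2
    by_contra h3
    push_neg at h3
    have ht : t ∈ S := by rw [hSdef]; exact ⟨⟨hx₀nonneg.trans h1.le, h2⟩, h3⟩
    have := le_csSup hSbdd ht
    rw [← hx₀def] at this
    linarith
  have hx₀lt : x₀ < x₁ := by
    have hcont : ContinuousAt u x₁ := (hu' x₁ hx₁pos).continuousAt
    have hev : ∀ᶠ t in nhds x₁, m < u t := hcont.eventually (eventually_gt_nhds hx₁)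
    obtain ⟨δ, hδ, hball⟩ := Metric.eventually_nhds_iff.mp hev
    have hδ'pos : 0 < min δ x₁ := lt_min hδ hx₁pos
    have hub : ∀ t ∈ S, t ≤ x₁ - min δ x₁ / 2 := by
      intro t ht
      rw [hSdef] at ht
      by_contra h
      push_neg at h
      have h1 : dist t x₁ < δ := by
        rw [Real.dist_eq, abs_lt]
        have : min δ x₁ ≤ δ := min_le_left _ _
        constructor <;> [linarith; linarith [ht.1.2]]
      exact absurd (hball h1) (not_lt.mpr ht.2)
    have := csSup_le ⟨0, hS0⟩ hub
    rw [← hx₀def] at this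
    linarith
  have hux₀ : u x₀ ≤ m := by
    rcases lt_or_eq_of_le hx₀nonneg with h0 | h0
    · by_contra h
      push_neg at h
      have hcont : ContinuousAt u x₀ := (hu' x₀ h0).continuousAt
      have hev : ∀ᶠ t in nhds x₀, m < u t := hcont.eventually (eventually_gt_nhds h)
      obtain ⟨δ, hδ, hball⟩ := Metric.eventually_nhds_iff.mp hev
      have hub : ∀ t ∈ S, t ≤ x₀ - δ := by
        intro t ht
        by_contra h2
        push_neg at h2
        have h3 : t ≤ x₀ := hx₀def ▸ le_csSup hSbdd ht
        have h4 : dist t x₀ < δ := by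
          rw [Real.dist_eq, abs_lt]; constructor <;> linarith
        rw [hSdef] at ht
        exact absurd (hball h4) (not_lt.mpr ht.2)
      have := csSup_le ⟨0, hS0⟩ hub
      rw [← hx₀def] at this
      linarith
    · rw [← h0, hu0]; exact hmpos.le
  -- a point c with u c > m and u' c > 0
  obtain ⟨c, hcmem, hceq⟩ := hMVTu x₀ x₁ hx₀nonneg hx₀lt
  have hcpos : 0 < c := lt_of_le_of_lt hx₀nonneg hcmem.1
  have hcu : m < u c := hbetween c hcmem.1 hcmem.2.le
  have hcp : 0 < u' c := by
    rw [hceq]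
    exact div_pos (by linarith) (by linarith [hcmem.2])
  obtain ⟨p, hpdef⟩ : ∃ p, p = u' c := ⟨_, rfl⟩
  have hppos : 0 < p := hpdef ▸ hcp
  -- u stays above m for all x ≥ c
  have hstay : ∀ x, c ≤ x → m < u x := by
    intro x hx
    by_contra h
    push_neg at h
    obtain ⟨T, hTdef⟩ : ∃ T : Set ℝ, T = {t | c ≤ t ∧ u t ≤ m} := ⟨_, rfl⟩
    have hxT : x ∈ T := by rw [hTdef]; exact ⟨hx, h⟩
    have hTbdd : BddBelow T := ⟨c, fun t ht => by rw [hTdef] at ht; exact ht.1⟩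
    obtain ⟨z, hzdef⟩ : ∃ z, z = sInf T := ⟨_, rfl⟩
    have hzc : c ≤ z :=
      hzdef ▸ le_csInf ⟨x, hxT⟩ (fun t ht => by rw [hTdef] at ht; exact ht.1)
    have hzpos : 0 < z := lt_of_lt_of_le hcpos hzc
    have huz : u z ≤ m := by
      by_contra h2
      push_neg at h2
      have hcont : ContinuousAt u z := (hu' z hzpos).continuousAt
      have hev : ∀ᶠ t in nhds z, m < u t := hcont.eventually (eventually_gt_nhds h2)
      obtain ⟨δ, hδ, hball⟩ := Metric.eventually_nhds_iff.mp hev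
      have hlb : ∀ t ∈ T, z + δ / 2 ≤ t := by
        intro t ht
        by_contra h3
        push_neg at h3
        have h4 : z ≤ t := hzdef ▸ csInf_le hTbdd ht
        have h5 : dist t z < δ := by
          rw [Real.dist_eq, abs_lt]; constructor <;> linarith
        rw [hTdef] at ht
        exact absurd (hball h5) (not_lt.mpr ht.2)
      have := le_csInf ⟨x, hxT⟩ hlb
      rw [← hzdef] at this
      linarith
    have hzc' : c < z := by
      rcases lt_or_eq_of_le hzc with h2 | h2
      · exact h2
      · exfalso; rw [← h2] at huz; linarith
    have hbet : ∀ y, c ≤ y → y < z → m < u y := by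
      intro y h1 h2
      by_contra h3
      push_neg at h3
      have hyT : y ∈ T := by rw [hTdef]; exact ⟨h1, h3⟩
      have := csInf_le hTbdd hyT
      rw [← hzdef] at this
      linarith
    obtain ⟨ξ, hξ, hξeq⟩ := hMVTu c z hcpos.le hzc'
    have hξneg : u' ξ < 0 := by
      rw [hξeq]
      exact div_neg_of_neg_of_pos (by linarith) (by linarith [hξ.2])
    obtain ⟨η, hη, hηeq⟩ := hMVTu' c ξ hcpos hξ.1
    have hη'' : 0 < u'' η :=
      hupp_pos η (hcpos.trans hη.1) (hbet η hη.1.le (hη.2.trans hξ.2))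
    rw [hηeq] at hη''
    have h6 := hdiv_pos _ _ (by linarith [hη.1, hη.2] : (0:ℝ) < ξ - c) hη''
    linarith
  -- u' is strictly increasing on [c, ∞)
  have hmono' : ∀ s t, c ≤ s → s < t → u' s < u' t := by
    intro s t hs hst
    obtain ⟨η, hη, hηeq⟩ := hMVTu' s t (hcpos.trans_le hs) hst
    have hη'' : 0 < u'' η :=
      hupp_pos η (hcpos.trans (lt_of_le_of_lt hs hη.1)) (hstay η (hs.trans hη.1.le))
    rw [hηeq] at hη''
    have h6 := hdiv_pos _ _ (by linarith [hη.1, hη.2] : (0:ℝ) < t - s) hη''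
    linarith
  have hu'ge : ∀ x, c ≤ x → p ≤ u' x := by
    intro x hx
    rcases lt_or_eq_of_le hx with h | h
    · exact hpdef ▸ (hmono' c x le_rfl h).le
    · rw [hpdef, ← h]
  -- linear growth
  have hgrow : ∀ s t, c ≤ s → s ≤ t → u s + p * (t - s) ≤ u t := by
    intro s t hs hst
    rcases lt_or_eq_of_le hst with h | h
    · obtain ⟨ξ, hξ, hξeq⟩ := hMVTu s t (hcpos.le.trans hs) h
      have h1 : p ≤ u' ξ := hu'ge ξ (hs.trans hξ.1.le)
      rw [hξeq] at h1
      have h2 : p * (t - s) ≤ (u t - u s) / (t - s) * (t - s) :=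
        mul_le_mul_of_nonneg_right h1 (by linarith)
      rw [div_mul_cancel₀ _ (by linarith : t - s ≠ 0)] at h2
      linarith
    · rw [h]; simp
  -- the point a where u > 2m, u stays > 2m afterwards
  obtain ⟨a, hadef⟩ : ∃ a, a = c + (2 * m + 1) / p := ⟨_, rfl⟩
  have hap : c < a := by
    have : 0 < (2 * m + 1) / p := div_pos (by linarith) hppos
    linarith [hadef.ge]
  have hua : 2 * m + 1 ≤ u a := by
    have h1 := hgrow c a le_rfl hap.le
    have h2 : p * (a - c) = 2 * m + 1 := by
      rw [hadef]; field_simp; ring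
    rw [h2] at h1
    linarith [hcu, hmpos]
  have hualt : ∀ x, a ≤ x → 2 * m < u x := by
    intro x hx
    have h1 := hgrow a x hap.le hx
    have h2 : 0 ≤ p * (x - a) := mul_nonneg hppos.le (by linarith)
    linarith
  have hapos : 0 < a := hcpos.trans hap
  -- energy estimate
  obtain ⟨K, hKdef⟩ : ∃ K, K = lam / (2 * d) := ⟨_, rfl⟩
  have hK : 0 < K := hKdef ▸ div_pos hlam (by linarith)
  have hg' : ∀ x, 0 < x → HasDerivAt (fun y => u' y ^ 2 - 2 * K / 3 * u y ^ 3)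
      (2 * u' x * u'' x - 2 * K * u x ^ 2 * u' x) x := by
    intro x hx
    have h1 := (hu'' x hx).fun_pow 2
    have h2 := ((hu' x hx).fun_pow 3).const_mul (2 * K / 3)
    have h3 := h1.fun_sub h2
    refine h3.congr_deriv ?_
    push_cast
    ring
  have hg'nonneg : ∀ x, a ≤ x → 0 ≤ 2 * u' x * u'' x - 2 * K * u x ^ 2 * u' x := by
    intro x hx
    have hxpos : 0 < x := hapos.trans_le hx
    have hux2m : 2 * m < u x := hualt x hx
    have huxpos : 0 < u x := hu_pos x hxpos
    have hfx : f x ≤ M := hfM x hxpos.le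
    have hKu : K * u x ^ 2 ≤ u'' x := by
      rw [hupp_eq x hxpos, le_div_iff₀ hd]
      have hKd : K * u x ^ 2 * d = lam * u x ^ 2 / 2 := by
        rw [hKdef]; field_simp
      rw [hKd]
      have h5 : u x * f x ≤ u x * (lam * m) := by
        rw [hMm]; exact mul_le_mul_of_nonneg_left hfx huxpos.le
      have h6 : lam * u x * (2 * m) < lam * u x * u x :=
        mul_lt_mul_of_pos_left hux2m (mul_pos hlam huxpos)
      nlinarith [h5, h6]
    have hu'x : 0 ≤ u' x := le_trans hppos.le (hu'ge x (hap.le.trans hx))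
    nlinarith [mul_nonneg hu'x (sub_nonneg.mpr hKu)]
  have hgmono : ∀ x, a ≤ x →
      u' a ^ 2 - 2 * K / 3 * u a ^ 3 ≤ u' x ^ 2 - 2 * K / 3 * u x ^ 3 := by
    intro x hx
    rcases lt_or_eq_of_le hx with h | h
    · obtain ⟨ξ, hξ, hξeq⟩ := exists_hasDerivAt_eq_slope
        (fun y => u' y ^ 2 - 2 * K / 3 * u y ^ 3)
        (fun y => 2 * u' y * u'' y - 2 * K * u y ^ 2 * u' y) h
        (fun y hy => (hg' y (hapos.trans_le hy.1)).continuousAt.continuousWithinAt)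
        (fun y hy => hg' y (hapos.trans hy.1))
      have h1 : 0 ≤ 2 * u' ξ * u'' ξ - 2 * K * u ξ ^ 2 * u' ξ := hg'nonneg ξ hξ.1.le
      rw [hξeq] at h1
      have h2 := hdiv_nonneg _ _ (by linarith [hξ.2] : (0:ℝ) < x - a) h1
      linarith
    · rw [← h]
  have huapos : 0 < u a := by linarith [hua, hmpos]
  -- the point b after which u ≥ 2 u a
  obtain ⟨b, hbdef⟩ : ∃ b, b = a + u a / p := ⟨_, rfl⟩
  have hab : a < b := by
    have : 0 < u a / p := div_pos huapos hppos
    linarith [hbdef.ge]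
  have hbpos : 0 < b := hapos.trans hab
  have hub2 : ∀ x, b ≤ x → 2 * u a ≤ u x := by
    intro x hx
    have h1 := hgrow a x hap.le (hab.le.trans hx)
    have h2 : u a ≤ p * (x - a) := by
      have h3 : u a / p ≤ x - a := by
        have h4 : b - a = u a / p := by rw [hbdef]; ring
        linarith
      calc u a = p * (u a / p) := by field_simp
      _ ≤ p * (x - a) := mul_le_mul_of_nonneg_left h3 hppos.le
    linarith
  obtain ⟨q, hqdef⟩ : ∃ q, q = K / 2 := ⟨_, rfl⟩
  have hq : 0 < q := by rw [hqdef]; positivity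
  have hkey : ∀ x, b ≤ x → q * u x ^ 3 ≤ u' x ^ 2 := by
    intro x hx
    have hxa : a ≤ x := hab.le.trans hx
    have h1 := hgmono x hxa
    have h2 := hub2 x hx
    have huxpos : 0 < u x := hu_pos x (hapos.trans_le hxa)
    have hcube : u a ^ 3 ≤ (u x / 2) ^ 3 :=
      pow_le_pow_left₀ huapos.le (by linarith) 3
    have hcube' : u a ^ 3 ≤ u x ^ 3 / 8 := by
      have : (u x / 2) ^ 3 = u x ^ 3 / 8 := by ring
      linarith
    have h3 : 0 ≤ K * (u x ^ 3 / 8 - u a ^ 3) :=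
      mul_nonneg hK.le (by linarith)
    have h4 : 0 ≤ K * u x ^ 3 := by positivity
    rw [hqdef]
    nlinarith [h1, h3, h4, sq_nonneg (u' a)]
  -- pointwise lower bound on u'
  have hu'sqrt : ∀ x, b ≤ x → Real.sqrt q * (u x * Real.sqrt (u x)) ≤ u' x := by
    intro x hx
    have huxpos : 0 < u x := hu_pos x (hbpos.trans_le hx)
    have hu'pos : 0 < u' x :=
      lt_of_lt_of_le hppos (hu'ge x (by linarith [hab.le.trans hx, hap.le]))
    have hA : (Real.sqrt q * (u x * Real.sqrt (u x))) ^ 2 = q * u x ^ 3 := by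
      rw [mul_pow, mul_pow, Real.sq_sqrt hq.le, Real.sq_sqrt huxpos.le]
      ring
    have hAnn : 0 ≤ Real.sqrt q * (u x * Real.sqrt (u x)) := by positivity
    calc Real.sqrt q * (u x * Real.sqrt (u x))
        = Real.sqrt ((Real.sqrt q * (u x * Real.sqrt (u x))) ^ 2) :=
          (Real.sqrt_sq hAnn).symm
      _ = Real.sqrt (q * u x ^ 3) := by rw [hA]
      _ ≤ Real.sqrt (u' x ^ 2) := Real.sqrt_le_sqrt (hkey x hx)
      _ = u' x := Real.sqrt_sq hu'pos.le
  -- function w = 1/sqrt(u) has derivative ≤ -m₁ after b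
  obtain ⟨m₁, hm₁def⟩ : ∃ y, y = Real.sqrt q / 2 := ⟨_, rfl⟩
  have hm₁pos : 0 < m₁ := by
    rw [hm₁def]
    have := Real.sqrt_pos.mpr hq
    positivity
  set w := fun y => (Real.sqrt (u y))⁻¹ with hwdef
  set W := fun y => -(u' y / (2 * Real.sqrt (u y))) / Real.sqrt (u y) ^ 2 with hWdef
  have hw' : ∀ x, b ≤ x → HasDerivAt w (W x) x := by
    intro x hx
    have hxpos : 0 < x := hbpos.trans_le hx
    have huxpos : 0 < u x := hu_pos x hxpos
    have hsq : Real.sqrt (u x) ≠ 0 := ne_of_gt (Real.sqrt_pos.mpr huxpos)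
    exact ((hu' x hxpos).sqrt huxpos.ne').inv hsq
  have hWle : ∀ x, b ≤ x → W x ≤ -m₁ := by
    intro x hx
    have hxpos : 0 < x := hbpos.trans_le hx
    have huxpos : 0 < u x := hu_pos x hxpos
    have hsqpos : 0 < Real.sqrt (u x) := Real.sqrt_pos.mpr huxpos
    have hkey2 := hu'sqrt x hx
    have hWeq : W x = -(u' x / (2 * Real.sqrt (u x) * u x)) := by
      rw [hWdef]
      simp only
      rw [Real.sq_sqrt huxpos.le, neg_div, div_div]
    rw [hWeq, hm₁def, neg_le_neg_iff, le_div_iff₀ (by positivity)]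
    nlinarith [hkey2, Real.sqrt_nonneg q, hsqpos.le]
  -- final contradiction via MVT on w
  have hwbpos : 0 < w b := by
    have hubpos : 0 < u b := hu_pos b hbpos
    have := Real.sqrt_pos.mpr hubpos
    rw [hwdef]
    positivity
  obtain ⟨X, hXdef⟩ : ∃ X, X = b + w b / m₁ + 1 := ⟨_, rfl⟩
  have hbX : b < X := by
    have : 0 < w b / m₁ := div_pos hwbpos hm₁pos
    linarith [hXdef.ge]
  obtain ⟨ξ, hξ, hξeq⟩ := exists_hasDerivAt_eq_slope w W hbX
    (fun y hy => (hw' y hy.1).continuousAt.continuousWithinAt)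
    (fun y hy => hw' y hy.1.le)
  have h1 : W ξ ≤ -m₁ := hWle ξ hξ.1.le
  rw [hξeq] at h1
  have h2 : w X - w b ≤ -m₁ * (X - b) := by
    rw [div_le_iff₀ (by linarith : (0:ℝ) < X - b)] at h1
    linarith
  have h3 : X - b = w b / m₁ + 1 := by rw [hXdef]; ring
  have h4 : m₁ * (w b / m₁) = w b := mul_div_cancel₀ _ hm₁pos.ne'
  have hwXpos : 0 < w X := by
    have huXpos : 0 < u X := hu_pos X (hbpos.trans hbX)
    have := Real.sqrt_pos.mpr huXpos
    rw [hwdef]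
    positivity
  nlinarith [h2, h3, h4, hwXpos, hm₁pos]
end

section
/- Let d > 0, λ > 0, and let f be continuous on [0,∞) with 0 < inf f ≤ sup f < ∞. If u₁, u₂ are positive solutions on (0,∞) of -d uᵢ'' = uᵢ(fᵢ(x) - λ uᵢ) with uᵢ(0) = 0, where f₁(x) ≤ f₂(x) for all x ≥ 0, inf_{x≥1} u₂ > 0, sup uᵢ < ∞, and uᵢ'(0) > 0, then u₁(x) ≤ u₂(x) for all x ≥ 0. -/
open Set Filter
open Topology


lemma dip_right (w wd wdd : ℝ → ℝ) (c δ x₀ : ℝ) (hc : 0 < c) (hδ : 0 < δ) (hδc : 2*δ ≤ c)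
    (hd1 : ∀ x ∈ Icc x₀ (x₀+1), HasDerivAt w (wd x) x)
    (hd2 : ∀ x ∈ Icc x₀ (x₀+1), HasDerivAt wd (wdd x) x)
    (hpos : ∀ x ∈ Icc x₀ (x₀+1), 0 ≤ w x)
    (hconc : ∀ x ∈ Icc x₀ (x₀+1), w x < δ → wdd x ≤ -c)
    (hw0 : w x₀ < δ) (hwd0 : wd x₀ ≤ 0) : False := by
  set T : Set ℝ := {x | x₀ ≤ x ∧ x ≤ x₀ + 1 ∧ ∀ t ∈ Icc x₀ x, w t < δ} with hT
  have hx₀T : x₀ ∈ T := by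
    refine ⟨le_refl _, by linarith, fun t ht => ?_⟩
    have : t = x₀ := le_antisymm ht.2 ht.1
    simpa [this] using hw0
  have key : ∀ x ∈ T, (∀ t ∈ Icc x₀ x, wd t ≤ -(c*(t - x₀))) ∧
      w x + c*(x - x₀)^2/2 ≤ w x₀ := by
    intro x hx
    obtain ⟨hx1, hx2, hx3⟩ := hx
    have hsub : Icc x₀ x ⊆ Icc x₀ (x₀+1) := Icc_subset_Icc le_rfl hx2
    have hA : ∀ t ∈ Icc x₀ x, wd t ≤ -(c*(t - x₀)) := by
      have hanti : AntitoneOn (fun t => wd t + c*t) (Icc x₀ x) := by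
        apply antitoneOn_of_deriv_nonpos (convex_Icc _ _)
        · exact fun t ht => ((hd2 t (hsub ht)).continuousAt.continuousWithinAt).add
            (continuous_const.mul continuous_id).continuousWithinAt
        · intro t ht
          rw [interior_Icc] at ht
          have h2 : HasDerivAt (fun y : ℝ => c*y) c t := by
            simpa using (hasDerivAt_id t).const_mul c
          exact (((hd2 t (hsub (Ioo_subset_Icc_self ht))).add h2).differentiableAt).differentiableWithinAt
        · intro t ht
          rw [interior_Icc] at ht
          have ht' := hsub (Ioo_subset_Icc_self ht)
          have h2 : HasDerivAt (fun y : ℝ => c*y) c t := by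
            simpa using (hasDerivAt_id t).const_mul c
          rw [(show HasDerivAt (fun t => wd t + c * t) _ t from (hd2 t ht').add h2).deriv]
          have := hconc t ht' (hx3 t (Ioo_subset_Icc_self ht))
          linarith
      intro t ht
      have h0 : x₀ ∈ Icc x₀ x := left_mem_Icc.2 (ht.1.trans ht.2)
      have := hanti h0 ht ht.1
      simp only at this
      linarith
    refine ⟨hA, ?_⟩
    have hanti2 : AntitoneOn (fun t => w t + c*(t - x₀)^2/2) (Icc x₀ x) := by
      apply antitoneOn_of_deriv_nonpos (convex_Icc _ _)
      · exact fun t ht => ((hd1 t (hsub ht)).continuousAt.continuousWithinAt).add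
          (((continuous_const.mul ((continuous_id.sub continuous_const).pow 2)).div_const 2).continuousWithinAt)
      · intro t ht
        rw [interior_Icc] at ht
        have hder : HasDerivAt (fun t => w t + c*(t - x₀)^2/2) (wd t + c*(t - x₀)) t := by
          have h1 := hd1 t (hsub (Ioo_subset_Icc_self ht))
          have h2 : HasDerivAt (fun t : ℝ => c*(t - x₀)^2/2) (c*(t - x₀)) t := by
            have : HasDerivAt (fun t : ℝ => t - x₀) 1 t := (hasDerivAt_id t).sub_const x₀
            have := ((this.pow 2).const_mul c).div_const 2
            refine this.congr_deriv ?_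
            simp
            ring
          exact h1.add h2
        exact hder.differentiableAt.differentiableWithinAt
      · intro t ht
        rw [interior_Icc] at ht
        have hder : HasDerivAt (fun t => w t + c*(t - x₀)^2/2) (wd t + c*(t - x₀)) t := by
          have h1 := hd1 t (hsub (Ioo_subset_Icc_self ht))
          have h2 : HasDerivAt (fun t : ℝ => c*(t - x₀)^2/2) (c*(t - x₀)) t := by
            have : HasDerivAt (fun t : ℝ => t - x₀) 1 t := (hasDerivAt_id t).sub_const x₀
            have := ((this.pow 2).const_mul c).div_const 2
            refine this.congr_deriv ?_
            simp
            ring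
          exact h1.add h2
        rw [hder.deriv]
        have := hA t (Ioo_subset_Icc_self ht)
        linarith
    have h0 : x₀ ∈ Icc x₀ x := left_mem_Icc.2 hx1
    have := hanti2 h0 (right_mem_Icc.2 hx1) hx1
    simp only at this
    linarith
  have hbound : ∀ x ∈ T, c*(x - x₀)^2/2 ≤ w x₀ := fun x hx => by
    have h1 := (key x hx).2
    have h2 := hpos x ⟨hx.1, hx.2.1⟩
    linarith
  have hTbdd : BddAbove T := ⟨x₀+1, fun x hx => hx.2.1⟩
  set b := sSup T with hb
  have hbmem : x₀ ≤ b := le_csSup hTbdd hx₀T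
  have hble : b ≤ x₀ + 1 := csSup_le ⟨x₀, hx₀T⟩ (fun x hx => hx.2.1)
  have hIco : ∀ t ∈ Ico x₀ b, t ∈ T := by
    intro t ht
    obtain ⟨x, hxT, hx⟩ := exists_lt_of_lt_csSup ⟨x₀, hx₀T⟩ ht.2
    exact ⟨ht.1, (le_of_lt hx).trans hxT.2.1, fun s hs => hxT.2.2 s ⟨hs.1, hs.2.trans hx.le⟩⟩
  have hwb : w b + c*(b - x₀)^2/2 ≤ w x₀ := by
    rcases eq_or_lt_of_le hbmem with h|h
    · simp [← h]
    · have hcont : ContinuousAt (fun t => w t + c*(t-x₀)^2/2) b :=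
        ((hd1 b ⟨hbmem, hble⟩).continuousAt).add
          (((continuous_const.mul ((continuous_id.sub continuous_const).pow 2)).div_const 2).continuousAt)
      have htend : Tendsto (fun t => w t + c*(t-x₀)^2/2) (𝓝[<] b) (𝓝 (w b + c*(b-x₀)^2/2)) :=
        hcont.continuousWithinAt.tendsto
      refine le_of_tendsto htend ?_
      filter_upwards [Ioo_mem_nhdsLT_of_mem (Set.mem_Ioc.2 ⟨h, le_rfl⟩)] with t ht
      exact (key t (hIco t ⟨ht.1.le, ht.2⟩)).2
  have hwbδ : w b < δ := by nlinarith [sq_nonneg (b - x₀)]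
  have hblt : b < x₀ + 1 := by
    have h2 := hpos b ⟨hbmem, hble⟩
    by_contra hcon
    push_neg at hcon
    have h3 : (1:ℝ) ≤ (b - x₀)^2 := by nlinarith
    nlinarith [mul_le_mul_of_nonneg_left h3 hc.le]
  have hcb : ContinuousAt w b := (hd1 b ⟨hbmem, hble⟩).continuousAt
  have hev : ∀ᶠ y in 𝓝 b, w y < δ := hcb.tendsto.eventually_lt_const hwbδ
  obtain ⟨ε, hε, hball⟩ := Metric.eventually_nhds_iff.1 hev
  set ε' := min (ε/2) (x₀ + 1 - b) with hε'
  have hε'pos : 0 < ε' := lt_min (by linarith) (by linarith)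
  have hmemT : b + ε' ∈ T := by
    refine ⟨by linarith, by have := min_le_right (ε/2) (x₀+1-b); simp only [hε']; linarith, ?_⟩
    intro t ht
    rcases lt_or_ge t b with h|h
    · exact ((hIco t ⟨ht.1, h⟩).2.2) t ⟨ht.1, le_rfl⟩
    · apply hball
      have h1 : t ≤ b + ε' := ht.2
      have h2 : ε' ≤ ε/2 := min_le_left _ _
      rw [Real.dist_eq, abs_lt]
      constructor <;> linarith
  have := le_csSup hTbdd hmemT
  linarith

lemma no_dip (w wd wdd : ℝ → ℝ) (c δ : ℝ) (hc : 0 < c) (hδ : 0 < δ) (hδc : 2*δ ≤ c)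
    (hd1 : ∀ x ∈ Ici (1:ℝ), HasDerivAt w (wd x) x)
    (hd2 : ∀ x ∈ Ici (1:ℝ), HasDerivAt wd (wdd x) x)
    (hpos : ∀ x ∈ Ici (1:ℝ), 0 ≤ w x)
    (hconc : ∀ x ∈ Ici (1:ℝ), w x < δ → wdd x ≤ -c) :
    ∀ x ∈ Ici (2:ℝ), δ ≤ w x := by
  intro x₀ hx₀
  rw [mem_Ici] at hx₀
  by_contra hcon
  push_neg at hcon
  have hsub : Icc x₀ (x₀+1) ⊆ Ici (1:ℝ) := fun t ht => by
    rw [mem_Ici]; have := ht.1; linarith [mem_Icc.1 ht]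
  rcases le_or_gt (wd x₀) 0 with h|h
  · exact dip_right w wd wdd c δ x₀ hc hδ hδc (fun x hx => hd1 x (hsub hx))
      (fun x hx => hd2 x (hsub hx)) (fun x hx => hpos x (hsub hx))
      (fun x hx => hconc x (hsub hx)) hcon h
  · have href : ∀ x ∈ Icc x₀ (x₀+1), (2*x₀ - x) ∈ Ici (1:ℝ) := fun x hx => by
      rw [mem_Ici]; have h1 := (mem_Icc.1 hx).1; have h2 := (mem_Icc.1 hx).2; linarith
    have hg : ∀ x : ℝ, HasDerivAt (fun y : ℝ => 2*x₀ - y) (-1) x := fun x => by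
      exact (hasDerivAt_id' x).const_sub (2*x₀)
    have hdv1 : ∀ x ∈ Icc x₀ (x₀+1), HasDerivAt (fun x => w (2*x₀-x)) (-wd (2*x₀-x)) x := by
      intro x hx
      have := (hd1 _ (href x hx)).comp x (hg x)
      exact this.congr_deriv (by ring)
    have hdv2 : ∀ x ∈ Icc x₀ (x₀+1),
        HasDerivAt (fun x => -wd (2*x₀-x)) (wdd (2*x₀-x)) x := by
      intro x hx
      have := ((hd2 _ (href x hx)).comp x (hg x)).neg
      exact this.congr_deriv (by ring)
    have hid : 2*x₀ - x₀ = x₀ := by ring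
    refine dip_right (fun x => w (2*x₀-x)) (fun x => -wd (2*x₀-x)) (fun x => wdd (2*x₀-x))
      c δ x₀ hc hδ hδc hdv1 hdv2 (fun x hx => hpos _ (href x hx))
      (fun x hx hw => hconc _ (href x hx) hw) (by simpa [hid] using hcon) (by simp only [hid]; linarith)

lemma strict_pos (w wd wdd : ℝ → ℝ)
    (hd1 : ∀ x ∈ Ioi (0:ℝ), HasDerivAt w (wd x) x)
    (hd2 : ∀ x ∈ Ioi (0:ℝ), HasDerivAt wd (wdd x) x)
    (hpos : ∀ x ∈ Ici (0:ℝ), 0 ≤ w x)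
    (hneg : ∀ x ∈ Ioi (0:ℝ), w x = 0 → wdd x < 0) :
    ∀ x ∈ Ioi (0:ℝ), 0 < w x := by
  intro x₀ hx₀
  rw [mem_Ioi] at hx₀
  rcases lt_or_eq_of_le (hpos x₀ (le_of_lt hx₀)) with h|h
  · exact h
  exfalso
  have hw0 : w x₀ = 0 := h.symm
  have hmin : IsLocalMin w x₀ := by
    filter_upwards [Ioi_mem_nhds hx₀] with y hy
    rw [hw0]
    exact hpos y (mem_Ici.2 (le_of_lt hy))
  have hwd0 : wd x₀ = 0 := hmin.hasDerivAt_eq_zero (hd1 x₀ hx₀)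
  have hdd := hneg x₀ hx₀ hw0
  have hslope : Tendsto (slope wd x₀) (𝓝[≠] x₀) (𝓝 (wdd x₀)) :=
    hasDerivAt_iff_tendsto_slope.1 (hd2 x₀ hx₀)
  have hev : ∀ᶠ y in 𝓝[≠] x₀, slope wd x₀ y < 0 := hslope.eventually_lt_const hdd
  rw [eventually_nhdsWithin_iff] at hev
  obtain ⟨ε, hε, hball⟩ := Metric.eventually_nhds_iff.1 hev
  have hεx : 0 < min (ε/2) (x₀/2) := lt_min (by linarith) (by linarith)
  have hwd_neg : ∀ y ∈ Ioo x₀ (x₀ + min (ε/2) (x₀/2)), wd y < 0 := by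
    intro y hy
    have h1 : y ≠ x₀ := ne_of_gt hy.1
    have h2 : dist y x₀ < ε := by
      rw [Real.dist_eq, abs_lt]
      have := min_le_left (ε/2) (x₀/2)
      constructor <;> [linarith [hy.1]; linarith [hy.2]]
    have := hball h2 h1
    rw [slope_def_field] at this
    have h3 : 0 < y - x₀ := by linarith [hy.1]
    rw [div_neg_iff] at this
    rcases this with ⟨h4, h5⟩|⟨h4, h5⟩
    · linarith
    · rw [hwd0] at h4; linarith
  set x₁ := x₀ + min (ε/2) (x₀/2) / 2 with hx₁
  have hanti : StrictAntiOn w (Icc x₀ x₁) := by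
    apply strictAntiOn_of_deriv_neg (convex_Icc _ _)
    · intro t ht
      have ht0 : 0 < t := lt_of_lt_of_le hx₀ ht.1
      exact (hd1 t ht0).continuousAt.continuousWithinAt
    · intro t ht
      rw [interior_Icc] at ht
      have ht0 : (0:ℝ) < t := lt_of_lt_of_le hx₀ ht.1.le
      rw [(hd1 t ht0).deriv]
      exact hwd_neg t ⟨ht.1, by rw [hx₁] at ht; linarith [ht.2]⟩
  have hx₁x : x₀ < x₁ := by rw [hx₁]; linarith
  have h1 := hanti (left_mem_Icc.2 hx₁x.le) (right_mem_Icc.2 hx₁x.le) hx₁x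
  have h2 := hpos x₁ (by rw [mem_Ici]; linarith)
  rw [hw0] at h1
  linarith

lemma hopf (w wd wdd : ℝ → ℝ) (K : ℝ) (hK : 0 < K)
    (hcont : ContinuousOn w (Ici 0))
    (hd1 : ∀ x ∈ Ioi (0:ℝ), HasDerivAt w (wd x) x)
    (hd2 : ∀ x ∈ Ioi (0:ℝ), HasDerivAt wd (wdd x) x)
    (hpos : ∀ x ∈ Ici (0:ℝ), 0 ≤ w x)
    (hw0 : w 0 = 0)
    (hder0 : HasDerivWithinAt w 0 (Ici 0) 0)
    (hineq : ∀ x ∈ Ioi (0:ℝ), wdd x ≤ K * w x) :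
    ∃ x ∈ Ioi (0:ℝ), w x = 0 := by
  set xb := Real.sqrt (1/K) with hxb
  have hxbpos : 0 < xb := Real.sqrt_pos.2 (by positivity)
  have hxbsq : K * xb^2 = 1 := by
    rw [hxb, Real.sq_sqrt (by positivity)]
    field_simp
  obtain ⟨z, hz, hzmax⟩ := isCompact_Icc.exists_isMaxOn (nonempty_Icc.2 hxbpos.le)
    (hcont.mono Icc_subset_Ici_self)
  set M := w z with hM
  have hzIcc : z ∈ Icc (0:ℝ) xb := hz
  have hM0 : 0 ≤ M := hpos z hzIcc.1
  set q : ℝ → ℝ := fun t => w t - K*M*t^2/2 with hq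
  set qd : ℝ → ℝ := fun t => wd t - K*M*t with hqd
  have hqder : ∀ t ∈ Ioi (0:ℝ), HasDerivAt q (qd t) t := by
    intro t ht
    have h2 : HasDerivAt (fun t : ℝ => K*M*t^2/2) (K*M*t) t := by
      have := (((hasDerivAt_id t).pow 2).const_mul (K*M)).div_const 2
      refine this.congr_deriv ?_
      simp
      ring
    exact (hd1 t ht).sub h2
  have hqcont : ContinuousOn q (Ici 0) :=
    hcont.sub ((continuous_const.mul (continuous_id.pow 2)).div_const 2).continuousOn
  have hqdle : ∀ s ∈ Ioo (0:ℝ) xb, qd s ≤ 0 := by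
    intro s hs
    by_contra hcon
    push_neg at hcon
    -- qd ≥ qd s on (0, s]
    have hmono : ∀ t ∈ Ioc (0:ℝ) s, qd s ≤ qd t := by
      intro t ht
      have hanti : AntitoneOn qd (Icc t s) := by
        apply antitoneOn_of_deriv_nonpos (convex_Icc _ _)
        · intro y hy
          have hy0 : (0:ℝ) < y := lt_of_lt_of_le ht.1 hy.1
          have hKM : HasDerivAt (fun y : ℝ => K*M*y) (K*M) y := by
            simpa using (hasDerivAt_id y).const_mul (K*M)
          exact ((hd2 y hy0).sub hKM).continuousAt.continuousWithinAt
        · intro y hy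
          rw [interior_Icc] at hy
          have hy0 : (0:ℝ) < y := lt_of_lt_of_le ht.1 hy.1.le
          exact (((hd2 y hy0).sub (by simpa using (hasDerivAt_id y).const_mul (K*M) :
            HasDerivAt (fun y : ℝ => K*M*y) (K*M) y)).differentiableAt).differentiableWithinAt
        · intro y hy
          rw [interior_Icc] at hy
          have hy0 : (0:ℝ) < y := lt_of_lt_of_le ht.1 hy.1.le
          have hKM : HasDerivAt (fun y : ℝ => K*M*y) (K*M) y := by
            simpa using (hasDerivAt_id y).const_mul (K*M)
          rw [(show HasDerivAt qd _ y from (hd2 y hy0).sub hKM).deriv]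
          have h1 := hineq y hy0
          have h2 : w y ≤ M := hzmax ⟨hy0.le, le_trans hy.2.le hs.2.le⟩
          nlinarith
      exact hanti ⟨le_rfl, ht.2⟩ ⟨ht.2, le_rfl⟩ ht.2
    -- q t ≥ qd s * t on (0, s]
    have hqlb : ∀ t ∈ Ioc (0:ℝ) s, qd s * t ≤ q t := by
      intro t ht
      have hmono2 : ∀ ε ∈ Ioo (0:ℝ) t, q ε - qd s * ε ≤ q t - qd s * t := by
        intro ε hε
        have hmo : MonotoneOn (fun y => q y - qd s * y) (Icc ε t) := by
          apply monotoneOn_of_deriv_nonneg (convex_Icc _ _)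
          · intro y hy
            have hy0 : (0:ℝ) < y := lt_of_lt_of_le hε.1 hy.1
            exact ((hqder y hy0).sub ((hasDerivAt_id y).const_mul (qd s))).continuousAt.continuousWithinAt.congr
              (fun a _ => by simp) (by simp)
          · intro y hy
            rw [interior_Icc] at hy
            have hy0 : (0:ℝ) < y := lt_of_lt_of_le hε.1 hy.1.le
            have hc : HasDerivAt (fun y : ℝ => qd s * y) (qd s) y := by
              simpa using (hasDerivAt_id y).const_mul (qd s)
            exact ((hqder y hy0).sub hc).differentiableAt.differentiableWithinAt
          · intro y hy
            rw [interior_Icc] at hy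
            have hy0 : (0:ℝ) < y := lt_of_lt_of_le hε.1 hy.1.le
            have hc : HasDerivAt (fun y : ℝ => qd s * y) (qd s) y := by
              simpa using (hasDerivAt_id y).const_mul (qd s)
            rw [(show HasDerivAt (fun y => q y - qd s * y) _ y from (hqder y hy0).sub hc).deriv]
            have := hmono y ⟨hy0, hy.2.le.trans ht.2⟩
            linarith
        exact hmo ⟨le_rfl, hε.2.le⟩ ⟨hε.2.le, le_rfl⟩ hε.2.le
      have hlim : Tendsto (fun ε => q ε - qd s * ε) (𝓝[>] (0:ℝ)) (𝓝 0) := by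
        have h1 : ContinuousWithinAt (fun ε => q ε - qd s * ε) (Ici 0) 0 :=
          (hqcont 0 self_mem_Ici).sub (continuous_const.mul continuous_id).continuousWithinAt
        have h2 := h1.tendsto
        have h3 : q 0 - qd s * 0 = 0 := by simp [hq, hw0]
        rw [h3] at h2
        exact h2.mono_left (nhdsWithin_mono 0 Ioi_subset_Ici_self)
      have := le_of_tendsto hlim (by
        filter_upwards [Ioo_mem_nhdsGT_of_mem (Set.mem_Ico.2 ⟨le_rfl, ht.1⟩)] with ε hε
        exact hmono2 ε hε)
      linarith
    -- slope of q at 0 tends to 0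
    have hslope : Tendsto (fun t => q t / t) (𝓝[>] (0:ℝ)) (𝓝 0) := by
      have h1 : Tendsto (slope w 0) (𝓝[Ici 0 \ {0}] 0) (𝓝 0) :=
        hasDerivWithinAt_iff_tendsto_slope.1 hder0
      have h2 : Ici (0:ℝ) \ {0} = Ioi 0 := Ici_sdiff_left
      rw [h2] at h1
      have h3 : Tendsto (fun t : ℝ => w t / t) (𝓝[>] (0:ℝ)) (𝓝 0) := by
        refine h1.congr' ?_
        filter_upwards [self_mem_nhdsWithin] with t _
        rw [slope_def_field]
        rw [hw0]
        ring_nf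
      have h4 : Tendsto (fun t : ℝ => K*M*t/2) (𝓝[>] (0:ℝ)) (𝓝 0) := by
        have hcont4 : Continuous (fun t : ℝ => K*M*t/2) := by continuity
        have h5 := hcont4.tendsto 0
        norm_num at h5
        exact h5.mono_left nhdsWithin_le_nhds
      have := h3.sub h4
      rw [sub_zero] at this
      refine this.congr' ?_
      filter_upwards [self_mem_nhdsWithin] with t ht
      rw [mem_Ioi] at ht
      field_simp [hq]
      ring
    have hfinal : qd s ≤ 0 := by
      refine ge_of_tendsto hslope ?_
      filter_upwards [Ioo_mem_nhdsGT_of_mem (Set.mem_Ico.2 ⟨le_rfl, hs.1⟩)] with t ht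
      rw [le_div_iff₀ ht.1]
      exact hqlb t ⟨ht.1, ht.2.le⟩
    linarith
  -- q antitone on [0, xb], hence w t ≤ K M t²/2
  have hqanti : AntitoneOn q (Icc 0 xb) := by
    apply antitoneOn_of_deriv_nonpos (convex_Icc _ _)
    · exact hqcont.mono Icc_subset_Ici_self
    · intro y hy
      rw [interior_Icc] at hy
      exact (hqder y hy.1).differentiableAt.differentiableWithinAt
    · intro y hy
      rw [interior_Icc] at hy
      rw [(hqder y hy.1).deriv]
      exact hqdle y hy
  have hwle : ∀ t ∈ Icc (0:ℝ) xb, w t ≤ K*M*t^2/2 := by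
    intro t ht
    have h0 : q t ≤ q 0 := hqanti (left_mem_Icc.2 hxbpos.le) ht ht.1
    have h1 : q 0 = 0 := by simp [hq, hw0]
    have h2 : q t = w t - K*M*t^2/2 := rfl
    rw [h1, h2] at h0
    linarith
  have hMz : M ≤ M/2 := by
    have h1 := hwle z hzIcc
    have h2 : K*M*z^2/2 ≤ K*M*xb^2/2 := by
      have hz2 : z^2 ≤ xb^2 := by nlinarith [hzIcc.1, hzIcc.2]
      have hKM0 : (0:ℝ) ≤ K*M := mul_nonneg hK.le hM0
      nlinarith [mul_le_mul_of_nonneg_left hz2 hKM0]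
    nlinarith
  have hMeq : M = 0 := by linarith
  refine ⟨xb, hxbpos, le_antisymm ?_ (hpos xb hxbpos.le)⟩
  have := hzmax (right_mem_Icc.2 hxbpos.le)
  rw [← hM, hMeq] at this
  exact this

set_option maxHeartbeats 2000000 in
/-- comparison principle for the half-line logistic-type problem. -/
theorem stmt1 (d lam : ℝ) (hd : 0 < d) (hlam : 0 < lam)
    (f₁ f₂ u₁ u₂ u₁' u₂' u₁'' u₂'' : ℝ → ℝ) (p₁ p₂ : ℝ)
    (hf₁c : ContinuousOn f₁ (Ici 0)) (hf₂c : ContinuousOn f₂ (Ici 0))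
    (m₁ m₂ M₁ M₂ : ℝ) (hm₁ : 0 < m₁) (hm₂ : 0 < m₂)
    (hf₁ : ∀ x ∈ Ici (0:ℝ), m₁ ≤ f₁ x ∧ f₁ x ≤ M₁)
    (hf₂ : ∀ x ∈ Ici (0:ℝ), m₂ ≤ f₂ x ∧ f₂ x ≤ M₂)
    (hff : ∀ x ∈ Ici (0:ℝ), f₁ x ≤ f₂ x)
    (hu₁c : ContinuousOn u₁ (Ici 0)) (hu₂c : ContinuousOn u₂ (Ici 0))
    (hu₁0 : u₁ 0 = 0) (hu₂0 : u₂ 0 = 0)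
    (hu₁pos : ∀ x ∈ Ioi (0:ℝ), 0 < u₁ x) (hu₂pos : ∀ x ∈ Ioi (0:ℝ), 0 < u₂ x)
    (hu₁' : ∀ x ∈ Ioi (0:ℝ), HasDerivAt u₁ (u₁' x) x)
    (hu₂' : ∀ x ∈ Ioi (0:ℝ), HasDerivAt u₂ (u₂' x) x)
    (hu₁'' : ∀ x ∈ Ioi (0:ℝ), HasDerivAt u₁' (u₁'' x) x)
    (hu₂'' : ∀ x ∈ Ioi (0:ℝ), HasDerivAt u₂' (u₂'' x) x)
    (hode₁ : ∀ x ∈ Ioi (0:ℝ), -(d * u₁'' x) = u₁ x * (f₁ x - lam * u₁ x))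
    (hode₂ : ∀ x ∈ Ioi (0:ℝ), -(d * u₂'' x) = u₂ x * (f₂ x - lam * u₂ x))
    (hder₁ : HasDerivWithinAt u₁ p₁ (Ici 0) 0) (hp₁ : 0 < p₁)
    (hder₂ : HasDerivWithinAt u₂ p₂ (Ici 0) 0) (hp₂ : 0 < p₂)
    (τ : ℝ) (hτ : 0 < τ) (hu₂lb : ∀ x ∈ Ici (1:ℝ), τ ≤ u₂ x)
    (B₁ B₂ : ℝ) (hu₁ub : ∀ x ∈ Ici (0:ℝ), u₁ x ≤ B₁)
    (hu₂ub : ∀ x ∈ Ici (0:ℝ), u₂ x ≤ B₂) :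
    ∀ x ∈ Ici (0:ℝ), u₁ x ≤ u₂ x := by
  have hB₂pos : 0 < B₂ :=
    lt_of_lt_of_le hτ ((hu₂lb 1 self_mem_Ici).trans (hu₂ub 1 (by norm_num)))
  have hB₁0 : 0 ≤ B₁ := hu₁0 ▸ hu₁ub 0 self_mem_Ici
  have hu₂0le : ∀ x ∈ Ici (0:ℝ), 0 ≤ u₂ x := by
    intro x hx
    rcases eq_or_lt_of_le (mem_Ici.1 hx) with h|h
    · rw [← h, hu₂0]
    · exact (hu₂pos x h).le
  -- slope limits at 0
  have hs₁ : Tendsto (fun x => u₁ x / x) (𝓝[>] (0:ℝ)) (𝓝 p₁) := by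
    have h1 := hasDerivWithinAt_iff_tendsto_slope.1 hder₁
    rw [Ici_sdiff_left] at h1
    refine h1.congr' ?_
    filter_upwards [self_mem_nhdsWithin] with t _
    rw [slope_def_field, hu₁0]
    ring_nf
  have hs₂ : Tendsto (fun x => u₂ x / x) (𝓝[>] (0:ℝ)) (𝓝 p₂) := by
    have h1 := hasDerivWithinAt_iff_tendsto_slope.1 hder₂
    rw [Ici_sdiff_left] at h1
    refine h1.congr' ?_
    filter_upwards [self_mem_nhdsWithin] with t _
    rw [slope_def_field, hu₂0]
    ring_nf
  have hrat : Tendsto (fun x => u₁ x / u₂ x) (𝓝[>] (0:ℝ)) (𝓝 (p₁/p₂)) := by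
    have h0 := hs₁.div hs₂ hp₂.ne'
    refine h0.congr' ?_
    filter_upwards [self_mem_nhdsWithin] with x hx
    rw [mem_Ioi] at hx
    have h2 := (hu₂pos x hx).ne'
    simp only [Pi.div_apply]
    field_simp
  have hsmall : ∀ r : ℝ, p₁/p₂ < r → ∃ η > 0, ∀ x ∈ Ioo (0:ℝ) η, u₁ x ≤ r * u₂ x := by
    intro r hr
    have hev : ∀ᶠ x in 𝓝[>] (0:ℝ), u₁ x / u₂ x < r := hrat.eventually_lt_const hr
    rw [eventually_nhdsWithin_iff] at hev
    obtain ⟨ε, hε, hball⟩ := Metric.eventually_nhds_iff.1 hev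
    refine ⟨ε, hε, fun x hx => ?_⟩
    have h1 : dist x 0 < ε := by
      rw [Real.dist_eq, sub_zero, abs_lt]
      exact ⟨by linarith [hx.1], hx.2⟩
    have h2 := hball h1 hx.1
    have h3 := hu₂pos x hx.1
    rw [div_lt_iff₀ h3] at h2
    linarith
  set KS : Set ℝ := {b | 1 ≤ b ∧ ∀ x ∈ Ici (0:ℝ), u₁ x ≤ b * u₂ x} with hKS
  have hKne : KS.Nonempty := by
    obtain ⟨η, hηpos, hηP⟩ := hsmall (p₁/p₂ + 1) (by linarith)
    have hmin01 : 0 < min η 1 := lt_min hηpos one_pos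
    set a := min η 1 / 2 with ha2
    have hapos : 0 < a := by rw [ha2]; linarith
    have haη : a < η := by
      have h1 := min_le_left η 1
      rw [ha2]; linarith
    have ha1 : a ≤ 1 := by
      have h1 := min_le_right η 1
      rw [ha2]; linarith
    obtain ⟨z, hz, hzmin⟩ := isCompact_Icc.exists_isMinOn (nonempty_Icc.2 ha1)
      (hu₂c.mono (fun t ht => le_trans hapos.le ht.1))
    have hzpos : 0 < u₂ z := hu₂pos z (lt_of_lt_of_le hapos hz.1)
    refine ⟨max 1 (max (p₁/p₂ + 1) (max (B₁ / u₂ z) (B₁ / τ))), le_max_left _ _, ?_⟩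
    intro x hx
    rw [mem_Ici] at hx
    set kk := max 1 (max (p₁/p₂ + 1) (max (B₁ / u₂ z) (B₁ / τ))) with hkk
    have hkk0 : (0:ℝ) ≤ kk := le_trans zero_le_one (le_max_left _ _)
    rcases eq_or_lt_of_le hx with h0|h0
    · rw [← h0, hu₁0, hu₂0, mul_zero]
    rcases lt_or_ge x a with hxa|hxa
    · have h1 := hηP x ⟨h0, lt_trans hxa haη⟩
      have hle : p₁/p₂ + 1 ≤ kk := le_trans (le_max_left _ _) (le_max_right _ _)
      have h2 : (0:ℝ) ≤ u₂ x := (hu₂pos x h0).le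
      linarith [mul_le_mul_of_nonneg_right hle h2, h1]
    rcases le_or_gt x 1 with hx1|hx1
    · have hz2 : u₂ z ≤ u₂ x := hzmin ⟨hxa, hx1⟩
      have hle : B₁ / u₂ z ≤ kk :=
        le_trans (le_trans (le_max_left _ _) (le_max_right _ _)) (le_max_right _ _)
      have h4 := hu₁ub x (by rw [mem_Ici]; linarith)
      have h5 : B₁ = (B₁ / u₂ z) * u₂ z := by field_simp
      calc u₁ x ≤ B₁ := h4
        _ = (B₁/u₂ z) * u₂ z := h5
        _ ≤ kk * u₂ z := mul_le_mul_of_nonneg_right hle hzpos.le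
        _ ≤ kk * u₂ x := mul_le_mul_of_nonneg_left hz2 hkk0
    · have hz2 : τ ≤ u₂ x := hu₂lb x hx1.le
      have hle : B₁ / τ ≤ kk :=
        le_trans (le_trans (le_max_right _ _) (le_max_right _ _)) (le_max_right _ _)
      have h4 := hu₁ub x (by rw [mem_Ici]; linarith)
      have h5 : B₁ = (B₁ / τ) * τ := by field_simp
      calc u₁ x ≤ B₁ := h4
        _ = (B₁/τ) * τ := h5
        _ ≤ kk * τ := mul_le_mul_of_nonneg_right hle hτ.le
        _ ≤ kk * u₂ x := mul_le_mul_of_nonneg_left hz2 hkk0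
  have hbddK : BddBelow KS := ⟨1, fun b hb => hb.1⟩
  set k := sInf KS with hkdef
  have hk1 : 1 ≤ k := le_csInf hKne fun b hb => hb.1
  have hkK : k ∈ KS := by
    refine ⟨hk1, ?_⟩
    intro x hx
    rw [mem_Ici] at hx
    rcases eq_or_lt_of_le hx with h0|h0
    · rw [← h0, hu₁0, hu₂0, mul_zero]
    · have hpos2 := hu₂pos x h0
      have hlb : ∀ b ∈ KS, u₁ x / u₂ x ≤ b := fun b hb =>
        (div_le_iff₀ hpos2).2 (by linarith [hb.2 x (le_of_lt h0)])
      have h1 := le_csInf hKne hlb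
      rw [div_le_iff₀ hpos2] at h1
      linarith
  rcases eq_or_lt_of_le hk1 with hke|hkgt
  · intro x hx
    have h1 := hkK.2 x hx
    rw [← hke, one_mul] at h1
    exact h1
  exfalso
  have hkpos : 0 < k := lt_trans one_pos hkgt
  -- the function w = k u₂ - u₁ and its derivatives
  set w : ℝ → ℝ := fun x => k * u₂ x - u₁ x with hwdef
  set wd : ℝ → ℝ := fun x => k * u₂' x - u₁' x with hwddef
  set wdd : ℝ → ℝ := fun x => k * u₂'' x - u₁'' x with hwdddef
  have hd1 : ∀ x ∈ Ioi (0:ℝ), HasDerivAt w (wd x) x := fun x hx =>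
    ((hu₂' x hx).const_mul k).sub (hu₁' x hx)
  have hd2 : ∀ x ∈ Ioi (0:ℝ), HasDerivAt wd (wdd x) x := fun x hx =>
    ((hu₂'' x hx).const_mul k).sub (hu₁'' x hx)
  have hwcont : ContinuousOn w (Ici 0) := (continuousOn_const.mul hu₂c).sub hu₁c
  have hw00 : w 0 = 0 := by simp [hwdef, hu₁0, hu₂0]
  have hwpos : ∀ x ∈ Ici (0:ℝ), 0 ≤ w x := by
    intro x hx
    have h1 := hkK.2 x hx
    simp only [hwdef]
    linarith
  have hodew : ∀ x ∈ Ioi (0:ℝ), d * wdd x =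
      u₁ x * (f₁ x - lam * u₁ x) - k * (u₂ x * (f₂ x - lam * u₂ x)) := by
    intro x hx
    have h1 := hode₁ x hx
    have h2 := hode₂ x hx
    simp only [hwdddef]
    linear_combination h1 - k * h2
  have hwdec : ∀ x ∈ Ioi (0:ℝ), d * wdd x =
      k*(u₂ x)*(f₁ x - f₂ x) - lam*k*(k-1)*(u₂ x)^2 - (w x)*(f₁ x)
        + 2*lam*k*(u₂ x)*(w x) - lam*(w x)^2 := by
    intro x hx
    have h1 := hodew x hx
    have h2 : u₁ x = k * u₂ x - w x := by simp [hwdef]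
    rw [h1, h2]
    ring
  have hstrict : ∀ x ∈ Ioi (0:ℝ), 0 < w x := by
    apply strict_pos w wd wdd hd1 hd2 hwpos
    intro x hx hwx
    have h1 := hwdec x hx
    rw [hwx] at h1
    have h3 := hu₂pos x hx
    have h4 := hff x (mem_Ici.2 (le_of_lt hx))
    have h5 : d * wdd x < 0 := by
      rw [h1]
      have t1 : 0 ≤ k*(u₂ x)*(f₂ x - f₁ x) :=
        mul_nonneg (mul_pos hkpos h3).le (by linarith)
      have t2 : 0 < lam*k*(k-1)*(u₂ x)^2 := by
        apply mul_pos (mul_pos (mul_pos hlam hkpos) (by linarith)) (pow_pos h3 2)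
      linarith [t1, t2]
    by_contra hcon
    push_neg at hcon
    linarith [mul_nonneg hd.le hcon]
  have hkK2 := hkK.2
  have hKSiff : ∀ b : ℝ, b ∈ KS ↔ 1 ≤ b ∧ ∀ x ∈ Ici (0:ℝ), u₁ x ≤ b * u₂ x :=
    fun b => Iff.rfl
  clear_value wdd wd w k KS
  -- constants for the dip argument
  set c₀ := lam * k * (k-1) * τ^2 with hc₀def
  have hc₀pos : 0 < c₀ :=
    mul_pos (mul_pos (mul_pos hlam hkpos) (by linarith)) (pow_pos hτ 2)
  set C₁ := 2 * lam * k * B₂ with hC₁def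
  have hC₁pos : 0 < C₁ := by
    apply mul_pos (mul_pos (by linarith) hkpos) hB₂pos
  set c := c₀ / (2*d) with hcdef
  have hcpos : 0 < c := div_pos hc₀pos (by linarith)
  set δ := min (c₀/(2*C₁)) (c₀/(4*d)) with hδdef
  have hδpos : 0 < δ :=
    lt_min (div_pos hc₀pos (by linarith)) (div_pos hc₀pos (by linarith))
  have hδc : 2*δ ≤ c := by
    have h1 : δ ≤ c₀/(4*d) := min_le_right _ _
    have h2 : c₀/(2*d) = 2*(c₀/(4*d)) := by field_simp; ring
    rw [hcdef, h2]
    linarith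
  have hδ1 : δ ≤ c₀/(2*C₁) := min_le_left _ _
  clear_value δ c C₁ c₀
  have hconc : ∀ x ∈ Ici (1:ℝ), w x < δ → wdd x ≤ -c := by
    intro x hx hwx
    rw [mem_Ici] at hx
    have hx0 : (0:ℝ) < x := lt_of_lt_of_le one_pos hx
    have h1 := hwdec x hx0
    have hu2τ := hu₂lb x hx
    have hu2B := hu₂ub x (by rw [mem_Ici]; linarith)
    have hwx0 := hwpos x (by rw [mem_Ici]; linarith)
    have hf1m := (hf₁ x (le_of_lt hx0)).1
    have hf12 := hff x (le_of_lt hx0)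
    have h3 := hu₂pos x hx0
    have t1 : k*(u₂ x)*(f₁ x - f₂ x) ≤ 0 := by
      have := mul_nonneg (mul_pos hkpos h3).le (by linarith : (0:ℝ) ≤ f₂ x - f₁ x)
      linarith [this]
    have t2 : lam*k*(k-1)*τ^2 ≤ lam*k*(k-1)*(u₂ x)^2 := by
      apply mul_le_mul_of_nonneg_left _
        (mul_nonneg (mul_nonneg hlam.le hkpos.le) (by linarith : (0:ℝ) ≤ k - 1))
      nlinarith
    have t3 : 0 ≤ (w x)*(f₁ x) := mul_nonneg hwx0 (by linarith)
    have t4 : 2*lam*k*(u₂ x)*(w x) ≤ C₁*(w x) := by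
      rw [hC₁def]
      have h6 : 2*lam*k*(u₂ x) ≤ 2*lam*k*B₂ :=
        mul_le_mul_of_nonneg_left hu2B (by positivity)
      exact mul_le_mul_of_nonneg_right h6 hwx0
    have t5 : 0 ≤ lam*(w x)^2 := by positivity
    have key : d * wdd x ≤ -c₀ + C₁ * w x := by
      rw [h1, hc₀def]
      linarith
    have hCw : C₁ * w x ≤ C₁ * δ := mul_le_mul_of_nonneg_left hwx.le hC₁pos.le
    have hCδ : C₁ * δ ≤ c₀/2 := by
      have h7 : δ * (2*C₁) ≤ c₀ := by
        rw [le_div_iff₀ (by linarith : (0:ℝ) < 2*C₁)] at hδ1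
        exact hδ1
      linarith
    have heq : d * c = c₀ / 2 := by
      rw [hcdef]
      field_simp
    have h8 : d * wdd x ≤ d * (-c) := by rw [mul_neg, heq]; linarith
    exact le_of_mul_le_mul_left h8 hd
  have hfar : ∀ x ∈ Ici (2:ℝ), δ ≤ w x := by
    apply no_dip w wd wdd c δ hcpos hδpos hδc
    · exact fun x hx => hd1 x (mem_Ioi.2 (lt_of_lt_of_le one_pos hx))
    · exact fun x hx => hd2 x (mem_Ioi.2 (lt_of_lt_of_le one_pos hx))
    · exact fun x hx => hwpos x (mem_Ici.2 (le_trans zero_le_one hx))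
    · exact hconc
  -- comparison of boundary derivatives
  have hple : p₁ ≤ k * p₂ := by
    have h1 : ∀ᶠ x in 𝓝[>] (0:ℝ), u₁ x / x ≤ k * (u₂ x / x) := by
      filter_upwards [self_mem_nhdsWithin] with x hx
      rw [mem_Ioi] at hx
      have h2 := hkK2 x hx.le
      rw [← mul_div_assoc]
      gcongr
    exact le_of_tendsto_of_tendsto hs₁ (hs₂.const_mul k) h1
  have hplt : p₁ < k * p₂ := by
    rcases lt_or_eq_of_le hple with h|h
    · exact h
    exfalso
    have hK2 : 0 < C₁ / d := div_pos hC₁pos hd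
    have hder0 : HasDerivWithinAt w 0 (Ici 0) 0 := by
      have h2 := (hder₂.const_mul k).sub hder₁
      rw [← h, sub_self] at h2
      rw [hwdef]
      exact h2
    have hineqH : ∀ x ∈ Ioi (0:ℝ), wdd x ≤ (C₁/d) * w x := by
      intro x hx
      have h1 := hwdec x hx
      have h3 := hu₂pos x hx
      have hu2B := hu₂ub x (mem_Ici.2 hx.le)
      have hwx0 := hwpos x (mem_Ici.2 hx.le)
      have hf1m := (hf₁ x (mem_Ici.2 hx.le)).1
      have hf12 := hff x (mem_Ici.2 hx.le)
      have t1 : k*(u₂ x)*(f₁ x - f₂ x) ≤ 0 := by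
        have := mul_nonneg (mul_pos hkpos h3).le (by linarith : (0:ℝ) ≤ f₂ x - f₁ x)
        nlinarith
      have t2 : 0 ≤ lam*k*(k-1)*(u₂ x)^2 := by
        apply mul_nonneg (mul_nonneg (mul_nonneg hlam.le hkpos.le) (by linarith)) (sq_nonneg _)
      have t3 : 0 ≤ (w x)*(f₁ x) := mul_nonneg hwx0 (by linarith)
      have t4 : 2*lam*k*(u₂ x)*(w x) ≤ C₁*(w x) := by
        rw [hC₁def]
        have h6 : 2*lam*k*(u₂ x) ≤ 2*lam*k*B₂ :=
          mul_le_mul_of_nonneg_left hu2B (by positivity)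
        exact mul_le_mul_of_nonneg_right h6 hwx0
      have t5 : 0 ≤ lam*(w x)^2 := by positivity
      have key : d * wdd x ≤ C₁ * w x := by rw [h1]; linarith
      rw [div_mul_eq_mul_div, le_div_iff₀ hd, mul_comm (wdd x) d]
      exact key
    obtain ⟨x, hx, hx0⟩ := hopf w wd wdd (C₁/d) hK2 hwcont hd1 hd2 hwpos hw00 hder0 hineqH
    exact absurd hx0 (ne_of_gt (hstrict x hx))
  -- now lower k, contradiction with the infimum
  have hqlt : p₁ / p₂ < k := (div_lt_iff₀ hp₂).2 hplt
  set ε₀ := min (k - 1) ((k - p₁/p₂)/2) with hε₀def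
  have hε₀pos : 0 < ε₀ := lt_min (by linarith) (by linarith)
  have hε₀k1 : ε₀ ≤ k - 1 := min_le_left _ _
  have hrlt : p₁/p₂ < k - ε₀ := by
    have h1 : ε₀ ≤ (k - p₁/p₂)/2 := min_le_right _ _
    linarith
  obtain ⟨η, hηpos, hηP⟩ := hsmall (k - ε₀) hrlt
  have hmin01 : 0 < min η 1 := lt_min hηpos one_pos
  set a := min η 1 / 2 with ha2
  have hapos : 0 < a := by rw [ha2]; linarith
  have haη : a < η := by
    have h1 := min_le_left η 1
    rw [ha2]; linarith
  have ha2le : a ≤ 2 := by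
    have h1 := min_le_right η 1
    rw [ha2]; linarith
  obtain ⟨z, hz, hzmin⟩ := isCompact_Icc.exists_isMinOn (nonempty_Icc.2 ha2le)
    (hwcont.mono (fun t ht => le_trans hapos.le ht.1))
  have hzpos : 0 < w z := hstrict z (lt_of_lt_of_le hapos hz.1)
  set ε := min ε₀ (min (δ/B₂) (w z/B₂)) with hεdef
  have hεpos : 0 < ε :=
    lt_min hε₀pos (lt_min (div_pos hδpos hB₂pos) (div_pos hzpos hB₂pos))
  have hεε₀ : ε ≤ ε₀ := min_le_left _ _
  have hεδ : ε * B₂ ≤ δ := by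
    have h1 : ε ≤ δ/B₂ := le_trans (min_le_right _ _) (min_le_left _ _)
    rw [le_div_iff₀ hB₂pos] at h1
    exact h1
  have hεμ : ε * B₂ ≤ w z := by
    have h1 : ε ≤ w z/B₂ := le_trans (min_le_right _ _) (min_le_right _ _)
    rw [le_div_iff₀ hB₂pos] at h1
    exact h1
  have hmem : (k - ε) ∈ KS := by
    rw [hKSiff]
    refine ⟨by linarith, ?_⟩
    intro x hx
    rw [mem_Ici] at hx
    rcases eq_or_lt_of_le hx with h0|h0
    · rw [← h0, hu₁0, hu₂0, mul_zero]
    have hu2x : 0 ≤ u₂ x := (hu₂pos x h0).le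
    have hu2Bx : u₂ x ≤ B₂ := hu₂ub x hx
    have hεu2 : ε * u₂ x ≤ ε * B₂ := mul_le_mul_of_nonneg_left hu2Bx hεpos.le
    have hwxeq : w x = k*u₂ x - u₁ x := by rw [hwdef]
    rcases lt_or_ge x a with hxa|hxa
    · have h1 := hηP x ⟨h0, lt_trans hxa haη⟩
      linarith [mul_le_mul_of_nonneg_right (by linarith : k - ε₀ ≤ k - ε) hu2x, h1]
    rcases le_or_gt x 2 with hx2|hx2
    · have h1 : w z ≤ w x := hzmin ⟨hxa, hx2⟩
      linarith [hwxeq, h1, hεμ, hεu2]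
    · have h1 : δ ≤ w x := hfar x (by rw [mem_Ici]; linarith)
      linarith [hwxeq, h1, hεδ, hεu2]
  have hfin := csInf_le hbddK hmem
  rw [← hkdef] at hfin
  linarith
end

section
/- Let d, λ > 0 and f : [0,∞) → ℝ satisfy the hypotheses of the existence theorem (continuous, bounded, inf f > 0). If u is the unique positive solution of -d u'' = u(f(x) - λ u) on (0,∞) with u(0) = 0 and f is nondecreasing with limit L at infinity, then u is nondecreasing and lim_{x→∞} u(x) = L/λ. -/
open Set Filter

/-- Second-derivative test: at an interior local max, `u' x = 0` and `u'' x ≤ 0`. -/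
lemma locmax_aux (u v w : ℝ → ℝ) (x : ℝ) (hx : 0 < x)
    (hu' : ∀ t ∈ Ioi (0:ℝ), HasDerivAt u (v t) t)
    (hw : HasDerivAt v (w x) x)
    (hmax : IsLocalMax u x) : v x = 0 ∧ w x ≤ 0 := by
  have h0 : v x = 0 := hmax.hasDerivAt_eq_zero (hu' x hx)
  refine ⟨h0, ?_⟩
  by_contra hc
  push_neg at hc
  -- slope of v at x tends to w x > 0, so v > 0 just right of x
  have hslope : Tendsto (slope v x) (nhdsWithin x {x}ᶜ) (nhds (w x)) :=
    hasDerivAt_iff_tendsto_slope.mp hw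
  have h1 : ∀ᶠ t in nhdsWithin x {x}ᶜ, 0 < slope v x t :=
    hslope.eventually (eventually_gt_nhds hc)
  have h2 : ∀ᶠ t in nhdsWithin x (Ioi x), 0 < slope v x t :=
    h1.filter_mono (nhdsWithin_mono x (fun t ht => ne_of_gt ht))
  have h3 : ∀ᶠ t in nhdsWithin x (Ioi x), u t ≤ u x :=
    eventually_nhdsWithin_of_eventually_nhds hmax
  obtain ⟨b, hb, hsub⟩ := mem_nhdsGT_iff_exists_Ioc_subset.mp (h2.and h3)
  -- on Ioc x b : v > 0 and u ≤ u x
  have hvpos : ∀ t ∈ Ioc x b, 0 < v t := by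
    intro t ht
    have := (hsub ht).1
    rw [slope_def_field] at this
    have ht1 : 0 < t - x := sub_pos.mpr ht.1
    have := mul_pos this ht1
    rw [div_mul_cancel₀] at this
    · linarith [this, h0.symm ▸ this]
    · exact ne_of_gt ht1
  -- u strictly increasing on [x, b]
  have hmono : StrictMonoOn u (Icc x b) := by
    apply strictMonoOn_of_deriv_pos (convex_Icc x b)
    · intro t ht
      exact (hu' t (lt_of_lt_of_le hx ht.1)).continuousAt.continuousWithinAt
    · intro t ht
      rw [interior_Icc] at ht
      rw [(hu' t (hx.trans ht.1)).deriv]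
      exact hvpos t ⟨ht.1, ht.2.le⟩
  have := hmono (left_mem_Icc.mpr hb.le) (right_mem_Icc.mpr hb.le) hb
  exact absurd ((hsub (right_mem_Ioc.mpr hb)).2) (not_le.mpr this)

/-- Second-derivative test at an interior local min. -/
lemma locmin_aux (u v w : ℝ → ℝ) (x : ℝ) (hx : 0 < x)
    (hu' : ∀ t ∈ Ioi (0:ℝ), HasDerivAt u (v t) t)
    (hw : HasDerivAt v (w x) x)
    (hmin : IsLocalMin u x) : v x = 0 ∧ 0 ≤ w x := by
  have := locmax_aux (fun t => -u t) (fun t => -v t) (fun t => -w t) x hx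
    (fun t ht => (hu' t ht).neg) hw.neg hmin.neg
  obtain ⟨h1, h2⟩ := this
  constructor
  · linarith
  · linarith

/-- Mean value growth estimate: if `v' ≥ m` on `(A,T)` then `v T ≥ v A + m (T - A)`. -/
lemma growth_aux (v v' : ℝ → ℝ) (A T m : ℝ) (hAT : A ≤ T)
    (hder : ∀ t ∈ Icc A T, HasDerivAt v (v' t) t)
    (hm : ∀ t ∈ Ioo A T, m ≤ v' t) :
    v A + m * (T - A) ≤ v T := by
  rcases eq_or_lt_of_le hAT with rfl | h
  · exact le_of_eq (by ring)
  have hcont : ContinuousOn v (Icc A T) :=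
    fun t ht => (hder t ht).continuousAt.continuousWithinAt
  obtain ⟨ξ, hξ, hsl⟩ := exists_hasDerivAt_eq_slope v v' h hcont
    (fun t ht => hder t ⟨ht.1.le, ht.2.le⟩)
  have h1 : m ≤ v' ξ := hm ξ hξ
  have h2 : v T - v A = v' ξ * (T - A) := by
    rw [eq_div_iff (sub_ne_zero.mpr h.ne')] at hsl
    linarith [hsl]
  nlinarith [sub_pos.mpr h]


set_option maxHeartbeats 2000000 in
/-- if `f` is nondecreasing with limit `L` at infinity, then the positive
solution `u` of the half-line problem is nondecreasing and `u(x) → L/λ` as `x → ∞`. -/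
theorem stmt2 (d lam L : ℝ) (hd : 0 < d) (hlam : 0 < lam)
    (f u u' u'' : ℝ → ℝ)
    (hf_cont : ContinuousOn f (Ici 0))
    (f₀ : ℝ) (hf₀ : 0 < f₀) (hf_lb : ∀ x ∈ Ici (0:ℝ), f₀ ≤ f x)
    (F : ℝ) (hf_ub : ∀ x ∈ Ici (0:ℝ), f x ≤ F)
    (hf_mono : MonotoneOn f (Ici 0))
    (hf_lim : Tendsto f atTop (nhds L))
    (hu_cont : ContinuousOn u (Ici 0))
    (hu0 : u 0 = 0)
    (hu_pos : ∀ x ∈ Ioi (0:ℝ), 0 < u x)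
    (B : ℝ) (hu_bdd : ∀ x ∈ Ici (0:ℝ), u x ≤ B)
    (hu' : ∀ x ∈ Ioi (0:ℝ), HasDerivAt u (u' x) x)
    (hu'' : ∀ x ∈ Ioi (0:ℝ), HasDerivAt u' (u'' x) x)
    (hode : ∀ x ∈ Ioi (0:ℝ), -(d * u'' x) = u x * (f x - lam * u x)) :
    MonotoneOn u (Ici 0) ∧ Tendsto u atTop (nhds (L / lam)) := by
  have mono : MonotoneOn u (Ici 0) := by
    rintro x hx y hy hxy
    by_contra hlt
    push_neg at hlt
    have hxy' : x < y := lt_of_le_of_ne hxy (by rintro rfl; exact lt_irrefl _ hlt)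
    have hy0 : 0 < y := lt_of_le_of_lt hx hxy'
    have huy : 0 < u y := hu_pos y hy0
    have hx0 : 0 < x := by
      rcases (mem_Ici.mp hx).lt_or_eq with h | h
      · exact h
      · exfalso; rw [← h, hu0] at hlt; linarith
    have hux : 0 < u x := hu_pos x hx0
    -- maximum of u on [0, y]
    obtain ⟨x1, hx1m, hx1max⟩ := isCompact_Icc.exists_isMaxOn (nonempty_Icc.mpr hy0.le)
      (hu_cont.mono Icc_subset_Ici_self)
    have hxu1 : u x ≤ u x1 := hx1max ⟨hx, hxy⟩
    have hyu1 : u y < u x1 := lt_of_lt_of_le hlt hxu1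
    have hx1pos : 0 < x1 := by
      rcases hx1m.1.lt_or_eq with h | h
      · exact h
      · exfalso; rw [← h, hu0] at hxu1; linarith
    have hx1y : x1 < y := by
      rcases hx1m.2.lt_or_eq with h | h
      · exact h
      · exfalso; rw [h] at hyu1; exact lt_irrefl _ hyu1
    have hloc : IsLocalMax u x1 := hx1max.isLocalMax (Icc_mem_nhds hx1pos hx1y)
    obtain ⟨hd1, hd2⟩ := locmax_aux u u' u'' x1 hx1pos hu' (hu'' x1 hx1pos) hloc
    have hu1pos : 0 < u x1 := hu_pos x1 hx1pos
    have key1 : lam * u x1 ≤ f x1 := by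
      have he := hode x1 hx1pos
      nlinarith [he, hd2, hu1pos, hd]
    -- an interior local min at s > x1 forces u x1 ≤ u s
    have intmin : ∀ s, x1 < s → IsLocalMin u s → u x1 ≤ u s := by
      intro s hs hls
      have hspos : 0 < s := hx1pos.trans hs
      obtain ⟨e1, e2⟩ := locmin_aux u u' u'' s hspos hu' (hu'' s hspos) hls
      have he := hode s hspos
      have husp : 0 < u s := hu_pos s hspos
      have hfs : f s ≤ lam * u s := by nlinarith [he, e2, husp, hd]
      have hf1s : f x1 ≤ f s := hf_mono (mem_Ici.mpr hx1pos.le) (mem_Ici.mpr hspos.le) hs.le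
      nlinarith [hlam]
    -- Step 2: u stays strictly below u x1 after y
    have step2 : ∀ t, y ≤ t → u t < u x1 := by
      intro t ht
      by_contra hge
      push_neg at hge
      obtain ⟨s, hsm, hsmin⟩ := isCompact_Icc.exists_isMinOn
        (nonempty_Icc.mpr (hx1y.le.trans ht))
        (hu_cont.mono (fun z hz => (hx1pos.le.trans hz.1 : (0:ℝ) ≤ z)))
      have hsy : u s ≤ u y := hsmin ⟨hx1y.le, ht⟩
      have hs1 : u s < u x1 := lt_of_le_of_lt hsy hyu1
      have hsx1 : x1 < s := lt_of_le_of_ne hsm.1 (by rintro rfl; exact lt_irrefl _ hs1)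
      have hst : s < t := lt_of_le_of_ne hsm.2 (by rintro rfl; linarith)
      have hls : IsLocalMin u s := hsmin.isLocalMin (Icc_mem_nhds hsx1 hst)
      linarith [intmin s hsx1 hls]
    -- Step 3: u'' < 0 beyond y
    have step3 : ∀ t, y ≤ t → u'' t < 0 := by
      intro t ht
      have h5 := step2 t ht
      have htpos : 0 < t := hy0.trans_le ht
      have he := hode t htpos
      have hft : f x1 ≤ f t := hf_mono (mem_Ici.mpr hx1pos.le) (mem_Ici.mpr htpos.le)
        ((hx1y.trans_le ht).le)
      have hut : 0 < u t := hu_pos t htpos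
      have h6 : lam * u t < lam * u x1 := (mul_lt_mul_iff_right₀ hlam).mpr h5
      have h7 : 0 < u t * (f t - lam * u t) := mul_pos hut (by linarith)
      nlinarith [he, h7, hd]
    -- u' strictly decreasing on [y, ∞)
    have hanti : StrictAntiOn u' (Ici y) := by
      apply strictAntiOn_of_deriv_neg (convex_Ici y)
      · intro t ht
        exact (hu'' t (hy0.trans_le ht)).continuousAt.continuousWithinAt
      · intro t ht
        rw [interior_Ici, mem_Ioi] at ht
        rw [(hu'' t (hy0.trans ht)).deriv]
        exact step3 t ht.le
    -- Step 4: u' ≥ 0 beyond y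
    have step4 : ∀ t, y ≤ t → 0 ≤ u' t := by
      intro t ht
      by_contra hneg
      push_neg at hneg
      have hpos' : 0 < -u' t := neg_pos.mpr hneg
      have htpos : 0 < t := hy0.trans_le ht
      have hut : 0 < u t := hu_pos t htpos
      set T := t + (u t + 1) / (-u' t) with hT
      have hTt : t < T := by
        have : 0 < (u t + 1) / (-u' t) := div_pos (by linarith) hpos'
        rw [hT]; linarith
      have hgrow := growth_aux (fun s => -u s) (fun s => -u' s) t T (-u' t) hTt.le
        (fun s hs => (hu' s (htpos.trans_le hs.1)).neg)
        (fun s hs => by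
          have := hanti (mem_Ici.mpr ht) (mem_Ici.mpr (ht.trans hs.1.le)) hs.1
          show -u' t ≤ -u' s
          linarith)
      have hTpos : 0 < T := htpos.trans hTt
      have huT : 0 < u T := hu_pos T hTpos
      have hcalc : (-u' t) * (T - t) = u t + 1 := by
        have heq : T - t = (u t + 1) / -u' t := by rw [hT]; ring
        rw [heq, mul_comm, div_mul_cancel₀ _ hpos'.ne']
      nlinarith [hgrow]
    -- Step 5: min of u on [x1, y]
    obtain ⟨s, hsm, hsmin⟩ := isCompact_Icc.exists_isMinOn (nonempty_Icc.mpr hx1y.le)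
      (hu_cont.mono (fun z hz => (hx1pos.le.trans hz.1 : (0:ℝ) ≤ z)))
    have hsy : u s ≤ u y := hsmin ⟨hx1y.le, le_refl y⟩
    have hs1 : u s < u x1 := lt_of_le_of_lt hsy hyu1
    have hsx1 : x1 < s := lt_of_le_of_ne hsm.1 (by rintro rfl; exact lt_irrefl _ hs1)
    rcases hsm.2.lt_or_eq with hst | hst
    · -- interior minimum: contradiction
      have hls : IsLocalMin u s := hsmin.isLocalMin (Icc_mem_nhds hsx1 hst)
      linarith [intmin s hsx1 hls]
    · -- s = y : y is a two-sided local min, contradicting u'' y < 0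
      subst hst
      have umono : MonotoneOn u (Ici s) := by
        apply monotoneOn_of_deriv_nonneg (convex_Ici s)
        · intro t ht
          exact (hu' t (hy0.trans_le ht)).continuousAt.continuousWithinAt
        · intro t ht
          rw [interior_Ici, mem_Ioi] at ht
          exact (hu' t (hy0.trans ht)).differentiableAt.differentiableWithinAt
        · intro t ht
          rw [interior_Ici, mem_Ioi] at ht
          rw [(hu' t (hy0.trans ht)).deriv]
          exact step4 t ht.le
      have hlocmin : IsLocalMin u s := by
        have hmem : Icc x1 (s + 1) ∈ nhds s := Icc_mem_nhds hsx1 (lt_add_one s)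
        filter_upwards [hmem] with t ht
        rcases le_total t s with h | h
        · exact hsmin ⟨ht.1, h⟩
        · exact umono self_mem_Ici (mem_Ici.mpr h) h
      obtain ⟨e1, e2⟩ := locmin_aux u u' u'' s hy0 hu' (hu'' s hy0) hlocmin
      linarith [step3 s le_rfl]
  refine ⟨mono, ?_⟩
  -- limit part
  have hg_mono : Monotone (fun x : ℝ => u (max x 0)) := by
    intro a b hab
    exact mono (mem_Ici.mpr (le_max_right a 0)) (mem_Ici.mpr (le_max_right b 0))
      (max_le_max hab le_rfl)
  have hg_bdd : BddAbove (range fun x : ℝ => u (max x 0)) :=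
    ⟨B, by rintro _ ⟨x, rfl⟩; exact hu_bdd _ (mem_Ici.mpr (le_max_right x 0))⟩
  set l := ⨆ x : ℝ, u (max x 0) with hl
  have hgl : Tendsto (fun x : ℝ => u (max x 0)) atTop (nhds l) :=
    tendsto_atTop_ciSup hg_mono hg_bdd
  have hul : Tendsto u atTop (nhds l) := by
    apply hgl.congr'
    filter_upwards [eventually_ge_atTop (0:ℝ)] with x hx
    rw [max_eq_left hx]
  have hlpos : 0 < l := by
    have h1 := le_ciSup hg_bdd (1:ℝ)
    have : u (max 1 0) = u 1 := by norm_num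
    rw [this] at h1
    exact lt_of_lt_of_le (hu_pos 1 (by norm_num : (1:ℝ) ∈ Ioi 0)) h1
  set c := l * (lam * l - L) / d with hcdef
  have hc : Tendsto u'' atTop (nhds c) := by
    have h1 : Tendsto (fun x => u x * (lam * u x - f x) / d) atTop (nhds c) :=
      (hul.mul ((tendsto_const_nhds.mul hul).sub hf_lim)).div_const d
    apply h1.congr'
    filter_upwards [eventually_gt_atTop (0:ℝ)] with x hx
    have he := hode x hx
    show u x * (lam * u x - f x) / d = u'' x
    rw [div_eq_iff hd.ne']
    linear_combination he
  have hczero : c = 0 := by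
    by_contra hc0
    rcases lt_or_gt_of_ne hc0 with hneg | hpos
    · -- c < 0 : u' → -∞, u becomes negative
      have hev : ∀ᶠ x : ℝ in atTop, u'' x < c / 2 :=
        hc.eventually (eventually_lt_nhds (by linarith : c < c / 2))
      obtain ⟨A0, hA0⟩ := eventually_atTop.mp hev
      set A := max A0 1 with hA
      have hA1 : (1:ℝ) ≤ A := le_max_right A0 1
      have hApos : (0:ℝ) < A := lt_of_lt_of_le one_pos hA1
      have hdecay : ∀ T, A ≤ T → u' T ≤ u' A + (c / 2) * (T - A) := by
        intro T hT
        have := growth_aux (fun s => -u' s) (fun s => -u'' s) A T (-(c / 2)) hT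
          (fun s hs => (hu'' s (hApos.trans_le hs.1)).neg)
          (fun s hs => by
            have := hA0 s ((le_max_left A0 1).trans hs.1.le)
            linarith)
        linarith
      set A2 := A + (2 / (-c)) * (|u' A| + 1) with hA2
      have hcneg : 0 < -c := neg_pos.mpr hneg
      have hA2A : A ≤ A2 := by
        have : 0 ≤ (2 / (-c)) * (|u' A| + 1) :=
          mul_nonneg (le_of_lt (div_pos two_pos hcneg)) (by positivity)
        rw [hA2]; linarith
      have hA2pos : 0 < A2 := lt_of_lt_of_le hApos hA2A
      have hu'neg : ∀ t, A2 ≤ t → u' t ≤ -1 := by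
        intro t ht
        have h1 := hdecay t (hA2A.trans ht)
        have h2 : (c / 2) * (t - A) ≤ (c / 2) * (A2 - A) := by
          apply mul_le_mul_of_nonpos_left _ (by linarith : c / 2 ≤ 0)
          linarith
        have h3 : (c / 2) * (A2 - A) = -(|u' A| + 1) := by
          rw [hA2]
          field_simp
          ring
        have h4 : u' A ≤ |u' A| := le_abs_self (u' A)
        linarith
      -- then u decreases to below 0
      have huA2 : 0 < u A2 := hu_pos A2 hA2pos
      set T := A2 + u A2 + 1 with hTd
      have hTA2 : A2 ≤ T := by rw [hTd]; linarith
      have hgrow := growth_aux (fun s => -u s) (fun s => -u' s) A2 T 1 hTA2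
        (fun s hs => (hu' s (hA2pos.trans_le hs.1)).neg)
        (fun s hs => by have := hu'neg s hs.1.le; show (1:ℝ) ≤ -u' s; linarith)
      have huT : 0 < u T := hu_pos T (hA2pos.trans_le hTA2)
      nlinarith [hgrow]
    · -- c > 0 : u' → +∞, u exceeds its bound
      have hev : ∀ᶠ x : ℝ in atTop, c / 2 < u'' x :=
        hc.eventually (eventually_gt_nhds (by linarith : c / 2 < c))
      obtain ⟨A0, hA0⟩ := eventually_atTop.mp hev
      set A := max A0 1 with hA
      have hA1 : (1:ℝ) ≤ A := le_max_right A0 1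
      have hApos : (0:ℝ) < A := lt_of_lt_of_le one_pos hA1
      have hgrow' : ∀ T, A ≤ T → u' A + (c / 2) * (T - A) ≤ u' T := by
        intro T hT
        exact growth_aux u' u'' A T (c / 2) hT
          (fun s hs => hu'' s (hApos.trans_le hs.1))
          (fun s hs => (hA0 s ((le_max_left A0 1).trans hs.1.le)).le)
      set A2 := A + (2 / c) * (|u' A| + 1) with hA2
      have hA2A : A ≤ A2 := by
        have : 0 ≤ (2 / c) * (|u' A| + 1) :=
          mul_nonneg (le_of_lt (div_pos two_pos hpos)) (by positivity)
        rw [hA2]; linarith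
      have hA2pos : 0 < A2 := lt_of_lt_of_le hApos hA2A
      have hu'pos : ∀ t, A2 ≤ t → 1 ≤ u' t := by
        intro t ht
        have h1 := hgrow' t (hA2A.trans ht)
        have h2 : (c / 2) * (A2 - A) ≤ (c / 2) * (t - A) := by
          apply mul_le_mul_of_nonneg_left _ (by linarith : 0 ≤ c / 2)
          linarith
        have h3 : (c / 2) * (A2 - A) = |u' A| + 1 := by
          rw [hA2]
          field_simp
          ring
        have h4 : -|u' A| ≤ u' A := neg_abs_le (u' A)
        linarith
      set T := A2 + (B + 1) - u A2 with hTd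
      have huA2 : 0 < u A2 := hu_pos A2 hA2pos
      have huA2B : u A2 ≤ B := hu_bdd A2 (mem_Ici.mpr hA2pos.le)
      have hTA2 : A2 ≤ T := by rw [hTd]; linarith
      have hgrow := growth_aux u u' A2 T 1 hTA2
        (fun s hs => hu' s (hA2pos.trans_le hs.1))
        (fun s hs => hu'pos s hs.1.le)
      have huT : u T ≤ B := hu_bdd T (mem_Ici.mpr (hA2pos.le.trans hTA2))
      nlinarith [hgrow]
  -- conclude l = L / lam
  have h0 : l * (lam * l - L) = 0 := by
    have : l * (lam * l - L) / d = 0 := hczero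
    field_simp [hd.ne'] at this
    linear_combination this
  rcases mul_eq_zero.mp h0 with h | h
  · exact absurd h (ne_of_gt hlpos)
  · have hLl : L / lam = l := by
      rw [div_eq_iff hlam.ne']
      linarith
    rw [hLl]
    exact hul
end

section
/- Suppose a, b, c > 0 with a(b+c) < 1. Let ū be the unique positive increasing solution of -u'' = u(1-u) on (0,∞) with u(0)=0 and u(∞)=1, and let v̄ be the unique positive solution of -d v'' = v(c - v + b ū(x)) with v(0)=0. Then v̄'(x) > 0 fails in general but lim_{x→∞} v̄(x) = b + c, and v̄(x) ≤ b + c for all x ≥ 0. -/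
open Set Filter

private lemma sMonoIcc {f f' : ℝ → ℝ} {a b : ℝ}
    (hcont : ContinuousOn f (Icc a b))
    (hder : ∀ x ∈ Ioo a b, HasDerivAt f (f' x) x)
    (hpos : ∀ x ∈ Ioo a b, 0 < f' x) : StrictMonoOn f (Icc a b) := by
  apply strictMonoOn_of_deriv_pos (convex_Icc a b) hcont
  intro x hx
  rw [interior_Icc] at hx
  rw [(hder x hx).deriv]
  exact hpos x hx

private lemma sAntiIcc {f f' : ℝ → ℝ} {a b : ℝ}
    (hcont : ContinuousOn f (Icc a b))
    (hder : ∀ x ∈ Ioo a b, HasDerivAt f (f' x) x)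
    (hneg : ∀ x ∈ Ioo a b, f' x < 0) : StrictAntiOn f (Icc a b) := by
  apply strictAntiOn_of_deriv_neg (convex_Icc a b) hcont
  intro x hx
  rw [interior_Icc] at hx
  rw [(hder x hx).deriv]
  exact hneg x hx

private lemma le_of_deriv_ge {f f' : ℝ → ℝ} {a b m : ℝ} (hab : a ≤ b)
    (hcont : ContinuousOn f (Icc a b))
    (hder : ∀ x ∈ Ioo a b, HasDerivAt f (f' x) x)
    (hm : ∀ x ∈ Ioo a b, m ≤ f' x) :
    f a + m * (b - a) ≤ f b := by
  have h : MonotoneOn (fun x => f x - m * x) (Icc a b) := by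
    apply monotoneOn_of_deriv_nonneg (convex_Icc a b)
    · exact hcont.sub (continuousOn_const.mul continuousOn_id)
    · intro x hx
      rw [interior_Icc] at hx
      have hg : HasDerivAt (fun x => f x - m * x) (f' x - m) x :=
        (hder x hx).sub (by simpa using (hasDerivAt_id x).const_mul m)
      exact hg.differentiableAt.differentiableWithinAt
    · intro x hx
      rw [interior_Icc] at hx
      have hg : HasDerivAt (fun x => f x - m * x) (f' x - m) x :=
        (hder x hx).sub (by simpa using (hasDerivAt_id x).const_mul m)
      rw [hg.deriv]
      have := hm x hx
      linarith
  have h2 := h (left_mem_Icc.2 hab) (right_mem_Icc.2 hab) hab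
  simp only [] at h2
  linarith

private lemma le_of_deriv_le {f f' : ℝ → ℝ} {a b M : ℝ} (hab : a ≤ b)
    (hcont : ContinuousOn f (Icc a b))
    (hder : ∀ x ∈ Ioo a b, HasDerivAt f (f' x) x)
    (hm : ∀ x ∈ Ioo a b, f' x ≤ M) :
    f b ≤ f a + M * (b - a) := by
  have := le_of_deriv_ge (f := fun x => -f x) (f' := fun x => -(f' x)) (m := -M) hab
    (hcont.neg) (fun x hx => (hder x hx).neg) (fun x hx => by simpa using hm x hx)
  linarith

set_option maxHeartbeats 2000000 in
/-- `v̄(x) → b + c` as `x → ∞` and `v̄ ≤ b + c` on `[0,∞)`. -/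
theorem stmt4 (a b c d : ℝ) (ha : 0 < a) (hb : 0 < b) (hc : 0 < c) (hd : 0 < d)
    (habc : a * (b + c) < 1)
    (ubar ubar' ubar'' vbar vbar' vbar'' : ℝ → ℝ)
    (hu_cont : ContinuousOn ubar (Ici 0)) (hu0 : ubar 0 = 0)
    (hu_pos : ∀ x ∈ Ioi (0:ℝ), 0 < ubar x)
    (hu' : ∀ x ∈ Ioi (0:ℝ), HasDerivAt ubar (ubar' x) x)
    (hu'' : ∀ x ∈ Ioi (0:ℝ), HasDerivAt ubar' (ubar'' x) x)
    (hu'pos : ∀ x ∈ Ioi (0:ℝ), 0 < ubar' x)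
    (hu_ode : ∀ x ∈ Ioi (0:ℝ), -(ubar'' x) = ubar x * (1 - ubar x))
    (hu_lim : Tendsto ubar atTop (nhds 1))
    (hv_cont : ContinuousOn vbar (Ici 0)) (hv0 : vbar 0 = 0)
    (hv_pos : ∀ x ∈ Ioi (0:ℝ), 0 < vbar x)
    (B : ℝ) (hv_bdd : ∀ x ∈ Ici (0:ℝ), vbar x ≤ B)
    (hv' : ∀ x ∈ Ioi (0:ℝ), HasDerivAt vbar (vbar' x) x)
    (hv'' : ∀ x ∈ Ioi (0:ℝ), HasDerivAt vbar' (vbar'' x) x)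
    (hv_ode : ∀ x ∈ Ioi (0:ℝ), -(d * vbar'' x) = vbar x * (c - vbar x + b * ubar x)) :
    Tendsto vbar atTop (nhds (b + c)) ∧ ∀ x ∈ Ici (0:ℝ), vbar x ≤ b + c := by
  -- vbar is continuous at positive points
  have hvca : ∀ x : ℝ, 0 < x → ContinuousAt vbar x := fun x hx => (hv' x hx).continuousAt
  have hv'ca : ∀ x : ℝ, 0 < x → ContinuousAt vbar' x := fun x hx => (hv'' x hx).continuousAt
  -- ubar ≤ 1 on (0,∞)
  have hu_le1 : ∀ x : ℝ, 0 < x → ubar x ≤ 1 := by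
    intro x hx
    refine ge_of_tendsto hu_lim (eventually_atTop.2 ⟨x, fun y hy => ?_⟩)
    rcases eq_or_lt_of_le hy with h | h
    · rw [h]
    · have hmono : StrictMonoOn ubar (Icc x y) := by
        apply sMonoIcc (f' := ubar')
        · intro z hz
          exact ((hu' z (lt_of_lt_of_le hx hz.1)).continuousAt).continuousWithinAt
        · intro z hz
          exact hu' z (lt_trans hx hz.1)
        · intro z hz
          exact hu'pos z (lt_trans hx hz.1)
      exact (hmono (left_mem_Icc.2 h.le) (right_mem_Icc.2 h.le) h).le
  -- second derivative positive where vbar > b + c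
  have hvpp_pos : ∀ x : ℝ, 0 < x → b + c < vbar x → 0 < vbar'' x := by
    intro x hx hv
    have h1 := hv_ode x hx
    have h2 := hv_pos x hx
    have h3 := hu_le1 x hx
    have h4 := (hu_pos x hx).le
    have hq : 0 < vbar x - c - b * ubar x := by nlinarith
    have h5 := mul_pos h2 hq
    nlinarith
  -- Part 1 : upper bound
  have upper : ∀ x ∈ Ici (0:ℝ), vbar x ≤ b + c := by
    by_contra hcon
    push_neg at hcon
    obtain ⟨x₀, hx₀, hvx₀⟩ := hcon
    have hx₀pos : 0 < x₀ := by
      rcases eq_or_lt_of_le (show (0:ℝ) ≤ x₀ from hx₀) with h | h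
      · exfalso; rw [← h, hv0] at hvx₀; linarith
      · exact h
    set K := Icc (0:ℝ) x₀ ∩ vbar ⁻¹' (Iic (b+c)) with hK
    have hKclosed : IsClosed K :=
      (hv_cont.mono (Icc_subset_Ici_self)).preimage_isClosed_of_isClosed isClosed_Icc isClosed_Iic
    have hKne : K.Nonempty := ⟨0, ⟨le_refl 0, hx₀pos.le⟩, by simp [hv0]; linarith⟩
    have hKbdd : BddAbove K := ⟨x₀, fun y hy => hy.1.2⟩
    have hαK : sSup K ∈ K := hKclosed.csSup_mem hKne hKbdd
    set α := sSup K with hαdef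
    have hα0 : 0 ≤ α := hαK.1.1
    have hvα : vbar α ≤ b + c := hαK.2
    have hαx₀ : α < x₀ := lt_of_le_of_ne hαK.1.2 (fun h => by rw [h] at hvα; linarith)
    have hgt : ∀ x : ℝ, α < x → x ≤ x₀ → b + c < vbar x := by
      intro x h1 h2
      by_contra h
      push_neg at h
      have hxK : x ∈ K := ⟨⟨le_trans hα0 h1.le, h2⟩, h⟩
      exact absurd (le_csSup hKbdd hxK) (not_le.2 h1)
    have hIccIci : Icc α x₀ ⊆ Ici (0:ℝ) := fun t ht => le_trans hα0 ht.1
    obtain ⟨ξ, hξ, hξslope⟩ := exists_hasDerivAt_eq_slope vbar vbar' hαx₀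
      (hv_cont.mono hIccIci) (fun x hx => hv' x (lt_of_le_of_lt hα0 hx.1))
    have hξpos : 0 < ξ := lt_of_le_of_lt hα0 hξ.1
    have hvξ : b + c < vbar ξ := hgt ξ hξ.1 hξ.2.le
    have hv'ξ : 0 < vbar' ξ := by
      rw [hξslope]
      apply div_pos (by linarith) (by linarith [hξ.1, hξ.2])
    -- vbar stays above b+c on [ξ, ∞)
    have hgt2 : ∀ z : ℝ, ξ ≤ z → b + c < vbar z := by
      by_contra h
      push_neg at h
      obtain ⟨z0, hz0ξ, hz0⟩ := h
      set N := Ici ξ ∩ vbar ⁻¹' (Iic (b+c)) with hN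
      have hNclosed : IsClosed N :=
        (hv_cont.mono (Ici_subset_Ici.2 hξpos.le)).preimage_isClosed_of_isClosed isClosed_Ici isClosed_Iic
      have hNne : N.Nonempty := ⟨z0, hz0ξ, hz0⟩
      have hNbdd : BddBelow N := ⟨ξ, fun y hy => hy.1⟩
      have hβN : sInf N ∈ N := hNclosed.csInf_mem hNne hNbdd
      set β := sInf N with hβdef
      have hvβ : vbar β ≤ b + c := hβN.2
      have hβξ : ξ < β := lt_of_le_of_ne hβN.1 (fun h => by rw [← h] at hvβ; linarith)
      have hmid : ∀ x : ℝ, ξ < x → x < β → b + c < vbar x := by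
        intro x h1 h2
        by_contra h
        push_neg at h
        exact absurd (csInf_le hNbdd ⟨h1.le, h⟩) (not_le.2 h2)
      have hpp : ∀ x ∈ Ioo ξ β, 0 < vbar'' x :=
        fun x hx => hvpp_pos x (lt_trans hξpos hx.1) (hmid x hx.1 hx.2)
      have hv'mono : StrictMonoOn vbar' (Icc ξ β) := by
        apply sMonoIcc (f' := vbar'')
        · exact fun z hz => (hv'ca z (lt_of_lt_of_le hξpos hz.1)).continuousWithinAt
        · exact fun z hz => hv'' z (lt_trans hξpos hz.1)
        · exact hpp
      have hvmono : StrictMonoOn vbar (Icc ξ β) := by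
        apply sMonoIcc (f' := vbar')
        · exact fun z hz => (hvca z (lt_of_lt_of_le hξpos hz.1)).continuousWithinAt
        · exact fun z hz => hv' z (lt_trans hξpos hz.1)
        · intro z hz
          have := hv'mono (left_mem_Icc.2 hβξ.le) (Ioo_subset_Icc_self hz) hz.1
          linarith
      have := hvmono (left_mem_Icc.2 hβξ.le) (right_mem_Icc.2 hβξ.le) hβξ
      linarith
    -- linear growth of vbar beyond ξ, contradicting boundedness
    have key : ∀ z : ℝ, ξ ≤ z → vbar ξ + vbar' ξ * (z - ξ) ≤ vbar z := by
      intro z hz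
      apply le_of_deriv_ge hz
      · exact fun t ht => (hvca t (lt_of_lt_of_le hξpos ht.1)).continuousWithinAt
      · exact fun t ht => hv' t (lt_trans hξpos ht.1)
      · intro x hx
        have hppz : ∀ y ∈ Ioo ξ z, 0 < vbar'' y :=
          fun y hy => hvpp_pos y (lt_trans hξpos hy.1) (hgt2 y hy.1.le)
        have hsm : StrictMonoOn vbar' (Icc ξ z) := by
          apply sMonoIcc (f' := vbar'')
          · exact fun t ht => (hv'ca t (lt_of_lt_of_le hξpos ht.1)).continuousWithinAt
          · exact fun t ht => hv'' t (lt_trans hξpos ht.1)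
          · exact hppz
        exact (hsm (left_mem_Icc.2 hz) (Ioo_subset_Icc_self hx) hx.1).le
    have hBξ : vbar ξ ≤ B := hv_bdd ξ hξpos.le
    set z := ξ + (B - vbar ξ)/(vbar' ξ) + 1 with hzdef
    have hzξ : ξ ≤ z := by
      have := div_nonneg (by linarith : (0:ℝ) ≤ B - vbar ξ) hv'ξ.le
      rw [hzdef]; linarith
    have h1 := key z hzξ
    have h2 := hv_bdd z (le_trans hξpos.le hzξ)
    have harith : vbar' ξ * (z - ξ) = B - vbar ξ + vbar' ξ := by
      rw [hzdef]; field_simp; ring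
    linarith
  refine ⟨?_, upper⟩
  -- Part 2 : the limit
  rw [Metric.tendsto_atTop]
  intro ε hε
  have main : ∃ N : ℝ, ∀ x ≥ N, b + c - ε < vbar x := by
    by_contra hcon
    push_neg at hcon
    have hev : ∀ᶠ x in atTop, 1 - ε/(4*b) < ubar x := by
      apply hu_lim
      apply Ioi_mem_nhds
      have : 0 < ε/(4*b) := by positivity
      linarith
    obtain ⟨X₀', hX₀'⟩ := eventually_atTop.1 hev
    set X₀ := max X₀' 1 with hX₀def
    have hX₀1 : (1:ℝ) ≤ X₀ := le_max_right _ _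
    have hX₀pos : (0:ℝ) < X₀ := lt_of_lt_of_le one_pos hX₀1
    have hbu : ∀ x : ℝ, X₀ ≤ x → b - ε/4 < b * ubar x := by
      intro x hx
      have h1 := hX₀' x (le_trans (le_max_left _ _) hx)
      have h2 : b * (1 - ε/(4*b)) < b * ubar x := by
        exact mul_lt_mul_of_pos_left h1 hb
      have h3 : b * (1 - ε/(4*b)) = b - ε/4 := by field_simp
      linarith
    set m := b + c - ε/2 with hmdef
    have hkey : ∀ x : ℝ, X₀ ≤ x → vbar x < m → d * vbar'' x ≤ -(vbar x * (ε/4)) := by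
      intro x hx hvm
      have hxpos : 0 < x := lt_of_lt_of_le hX₀pos hx
      have h1 := hv_ode x hxpos
      have h2 := hv_pos x hxpos
      have h3 := hbu x hx
      have hq : ε/4 < c - vbar x + b * ubar x := by rw [hmdef] at hvm; linarith
      nlinarith [mul_lt_mul_of_pos_left hq h2]
    by_cases hA : ∃ X₁ : ℝ, X₀ ≤ X₁ ∧ ∀ x : ℝ, X₁ ≤ x → vbar x < m
    · -- Case A: vbar eventually below m; then v is eventually concave, contradiction
      obtain ⟨X₁, hX₁X₀, hX₁⟩ := hA
      have hX₁pos : 0 < X₁ := lt_of_lt_of_le hX₀pos hX₁X₀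
      have hpp : ∀ x : ℝ, X₁ < x → vbar'' x < 0 := by
        intro x hx
        have h := hkey x (le_trans hX₁X₀ hx.le) (hX₁ x hx.le)
        have hvp := hv_pos x (lt_trans hX₁pos hx)
        nlinarith
      have hv'nonneg : ∀ x : ℝ, X₁ < x → 0 ≤ vbar' x := by
        intro x₁ hx₁
        by_contra hneg
        push_neg at hneg
        set w := -vbar' x₁ with hw
        have hwpos : 0 < w := by rw [hw]; linarith
        have hx₁pos : 0 < x₁ := lt_trans hX₁pos hx₁
        have hvx₁pos : 0 < vbar x₁ := hv_pos x₁ hx₁pos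
        set z := x₁ + vbar x₁ / w + 1 with hzdef
        have hzx₁ : x₁ ≤ z := by
          have := div_nonneg hvx₁pos.le hwpos.le
          rw [hzdef]; linarith
        have hub : vbar z ≤ vbar x₁ + vbar' x₁ * (z - x₁) := by
          apply le_of_deriv_le hzx₁
          · exact fun t ht => (hvca t (lt_of_lt_of_le hx₁pos ht.1)).continuousWithinAt
          · exact fun t ht => hv' t (lt_trans hx₁pos ht.1)
          · intro x hx
            have hanti : StrictAntiOn vbar' (Icc X₁ z) := by
              apply sAntiIcc (f' := vbar'')
              · exact fun t ht => (hv'ca t (lt_of_lt_of_le hX₁pos ht.1)).continuousWithinAt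
              · exact fun t ht => hv'' t (lt_trans hX₁pos ht.1)
              · exact fun t ht => hpp t ht.1
            exact (hanti ⟨hx₁.le, le_trans hx.1.le hx.2.le⟩
              ⟨le_trans hx₁.le hx.1.le, hx.2.le⟩ hx.1).le
        have harith : vbar' x₁ * (z - x₁) = -(vbar x₁) - w := by
          rw [hzdef]
          have : vbar' x₁ = -w := by rw [hw]; ring
          rw [this]
          field_simp
          ring
        have hvz := hv_pos z (lt_of_lt_of_le hx₁pos hzx₁)
        linarith
      set δ := vbar (X₁+1) with hδdef
      have hδpos : 0 < δ := hv_pos _ (mem_Ioi.2 (by linarith))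
      have hmono : ∀ z : ℝ, X₁ + 1 ≤ z → δ ≤ vbar z := by
        intro z hz
        have h := le_of_deriv_ge (m := 0) hz
          (fun t ht => (hvca t (by have := ht.1; have := ht.2; linarith)).continuousWithinAt)
          (fun t ht => hv' t (mem_Ioi.2 (by have := ht.1; have := ht.2; linarith)))
          (fun t ht => hv'nonneg t (by have := ht.1; have := ht.2; linarith))
        rw [hδdef]; linarith
      set K0 := δ * ε / (4*d) with hK0def
      have hK0pos : 0 < K0 := by rw [hK0def]; positivity
      have hpp2 : ∀ x : ℝ, X₁ + 1 < x → vbar'' x ≤ -K0 := by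
        intro x hx
        have h := hkey x (by linarith) (hX₁ x (by linarith))
        have h2 := hmono x hx.le
        have hstep : d * vbar'' x ≤ -(δ * ε / 4) := by nlinarith
        rw [show -K0 = (-(δ * ε / 4))/d by rw [hK0def]; field_simp]
        rw [le_div_iff₀ hd]
        linarith [hstep]
      have hv'X₁1 : 0 ≤ vbar' (X₁+1) := hv'nonneg _ (by linarith)
      set z := X₁ + 1 + (vbar' (X₁+1) + 1)/K0 with hzdef
      have hz1 : X₁ + 1 ≤ z := by
        have := div_nonneg (by linarith : (0:ℝ) ≤ vbar' (X₁+1) + 1) hK0pos.le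
        rw [hzdef]; linarith
      have hub : vbar' z ≤ vbar' (X₁+1) + (-K0) * (z - (X₁+1)) := by
        apply le_of_deriv_le hz1
        · exact fun t ht => (hv'ca t (by have := ht.1; have := ht.2; linarith)).continuousWithinAt
        · exact fun t ht => hv'' t (mem_Ioi.2 (by have := ht.1; have := ht.2; linarith))
        · exact fun t ht => hpp2 t ht.1
      have harith : (-K0) * (z - (X₁+1)) = -(vbar' (X₁+1) + 1) := by
        rw [hzdef]; field_simp; ring
      have := hv'nonneg z (by linarith)
      linarith
    · -- Case B: vbar returns near m infinitely often; local minimum contradiction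
      push_neg at hA
      obtain ⟨x₁, hx₁X₀, hvx₁⟩ := hA X₀ le_rfl
      obtain ⟨y, hy, hvy⟩ := hcon (x₁ + 1)
      have hvym : vbar y < m := by rw [hmdef]; linarith
      obtain ⟨x₂, hx₂y, hvx₂⟩ := hA y (by linarith)
      have hx₂y' : y < x₂ := lt_of_le_of_ne hx₂y (fun h => by rw [h] at hvym; linarith)
      have hx₁y : x₁ < y := by linarith
      have hx₁pos : 0 < x₁ := lt_of_lt_of_le hX₀pos hx₁X₀
      have hcontIcc : ContinuousOn vbar (Icc x₁ x₂) :=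
        hv_cont.mono (fun t ht => le_trans hx₁pos.le ht.1)
      obtain ⟨y₀, hy₀mem, hy₀min⟩ := isCompact_Icc.exists_isMinOn
        (nonempty_Icc.2 (by linarith)) hcontIcc
      have hy₀min' : ∀ t ∈ Icc x₁ x₂, vbar y₀ ≤ vbar t := fun t ht => hy₀min ht
      have hy₀y : vbar y₀ ≤ vbar y := hy₀min' y ⟨hx₁y.le, hx₂y⟩
      have hy₀m : vbar y₀ < m := lt_of_le_of_lt hy₀y hvym
      have hy₀lt1 : x₁ < y₀ :=
        lt_of_le_of_ne hy₀mem.1 (fun h => by rw [h] at hvx₁; linarith)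
      have hy₀lt2 : y₀ < x₂ :=
        lt_of_le_of_ne hy₀mem.2 (fun h => by rw [h] at hy₀m; linarith)
      have hy₀pos : 0 < y₀ := lt_trans hx₁pos hy₀lt1
      have hloc : IsLocalMin vbar y₀ := hy₀min.isLocalMin (Icc_mem_nhds hy₀lt1 hy₀lt2)
      have hv'y₀ : vbar' y₀ = 0 := hloc.hasDerivAt_eq_zero (hv' y₀ hy₀pos)
      have hev2 : ∀ᶠ x in nhds y₀, vbar x < m := (hvca y₀ hy₀pos) (Iio_mem_nhds hy₀m)
      obtain ⟨δ', hδ'pos, hδ'⟩ := Metric.eventually_nhds_iff.1 hev2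
      set δ₂ := min (δ'/2) ((x₂ - y₀)/2) with hδ₂def
      have hδ₂pos : 0 < δ₂ := lt_min (by linarith) (by linarith)
      have hδ₂a : δ₂ < δ' := lt_of_le_of_lt (min_le_left _ _) (by linarith)
      have hδ₂b : y₀ + δ₂ < x₂ := by
        have := min_le_right (δ'/2) ((x₂ - y₀)/2)
        rw [hδ₂def]; linarith [this]
      have hpp3 : ∀ x ∈ Ioo y₀ (y₀+δ₂), vbar'' x < 0 := by
        intro x hx
        have hdist : dist x y₀ < δ' := by
          rw [Real.dist_eq, abs_lt]
          constructor <;> [linarith [hx.1]; linarith [hx.2]]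
        have hvm := hδ' hdist
        have hxX₀ : X₀ ≤ x := le_trans hx₁X₀ (le_trans hy₀lt1.le hx.1.le)
        have h := hkey x hxX₀ hvm
        have hvp := hv_pos x (lt_trans hy₀pos hx.1)
        nlinarith
      have hanti : StrictAntiOn vbar' (Icc y₀ (y₀+δ₂)) := by
        apply sAntiIcc (f' := vbar'')
        · exact fun t ht => (hv'ca t (lt_of_lt_of_le hy₀pos ht.1)).continuousWithinAt
        · exact fun t ht => hv'' t (lt_trans hy₀pos ht.1)
        · exact hpp3
      have hanti2 : StrictAntiOn vbar (Icc y₀ (y₀+δ₂)) := by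
        apply sAntiIcc (f' := vbar')
        · exact fun t ht => (hvca t (lt_of_lt_of_le hy₀pos ht.1)).continuousWithinAt
        · exact fun t ht => hv' t (lt_trans hy₀pos ht.1)
        · intro t ht
          have := hanti (left_mem_Icc.2 (by linarith)) (Ioo_subset_Icc_self ht) ht.1
          rw [hv'y₀] at this
          linarith
      have hlt := hanti2 (left_mem_Icc.2 (by linarith)) (right_mem_Icc.2 (by linarith))
        (by linarith)
      have hge := hy₀min' (y₀ + δ₂) ⟨by linarith, hδ₂b.le⟩
      linarith
  obtain ⟨N, hN⟩ := main
  refine ⟨max N 0, fun x hx => ?_⟩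
  have h1 := hN x (le_trans (le_max_left _ _) hx)
  have h2 := upper x (le_trans (le_max_right _ _) hx)
  rw [Real.dist_eq, abs_lt]
  constructor <;> linarith
end

section
/- Let d, λ > 0, f bounded continuous with inf f > 0, K > (sup f)/λ. For large l, let ū_l be the unique positive solution of -d u'' = u(f(x) - λ u) on (0,l) with u(0) = 0, u(l) = K. Then ū_l(x) ≥ û(x) on [0,l] where û is the unique positive solution of the half-line problem with û(0)=0, and ū_l is nonincreasing in l. -/
open Set

open Filter Topology in
lemma no_interior_max (g g' : ℝ → ℝ) (p q x₀ c : ℝ) (hx : x₀ ∈ Ioo p q)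
    (hg : ∀ x ∈ Ioo p q, HasDerivAt g (g' x) x)
    (h2 : HasDerivAt g' c x₀) (hc : 0 < c)
    (hmax : ∀ x ∈ Ioo p q, g x ≤ g x₀) : False := by
  have hg'0 : g' x₀ = 0 := by
    have hloc : IsLocalMax g x₀ := by
      filter_upwards [Ioo_mem_nhds hx.1 hx.2] with y hy using hmax y hy
    exact hloc.hasDerivAt_eq_zero (hg x₀ hx)
  have hslope : Tendsto (slope g' x₀) (𝓝[>] x₀) (𝓝 c) :=
    (hasDerivAt_iff_tendsto_slope.mp h2).mono_left
      (nhdsWithin_mono _ (fun y hy => ne_of_gt hy))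
  have hev : ∀ᶠ y in 𝓝[>] x₀, 0 < slope g' x₀ y ∧ y ∈ Ioo x₀ q := by
    filter_upwards [hslope.eventually (eventually_gt_nhds hc),
      Ioo_mem_nhdsGT_of_mem ⟨le_refl x₀, hx.2⟩] with y h1 h2 using ⟨h1, h2⟩
  obtain ⟨y, hy, hsub⟩ := mem_nhdsGT_iff_exists_Ioc_subset.mp hev
  have hyy : 0 < slope g' x₀ y ∧ y ∈ Ioo x₀ q := hsub ⟨hy, le_refl y⟩
  -- MVT on [x₀, y]
  have hyx : x₀ < y := hy
  have hIccsub : Icc x₀ y ⊆ Ioo p q := fun z hz => ⟨lt_of_lt_of_le hx.1 hz.1, lt_of_le_of_lt hz.2 hyy.2.2⟩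
  obtain ⟨ξ, hξ, hξeq⟩ := exists_hasDerivAt_eq_slope g g' hyx
    (fun z hz => (hg z (hIccsub hz)).continuousAt.continuousWithinAt)
    (fun z hz => hg z (hIccsub ⟨le_of_lt hz.1, le_of_lt hz.2⟩))
  have hξpos : 0 < g' ξ := by
    have := hsub ⟨hξ.1, le_of_lt hξ.2⟩
    have hs := this.1
    rw [slope_def_field, hg'0] at hs
    have hden : 0 < ξ - x₀ := sub_pos.2 hξ.1
    rcases div_pos_iff.mp hs with ⟨h1, _⟩ | ⟨_, h2⟩ <;> linarith
  have hgy : g x₀ < g y := by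
    have hnum : 0 < (g y - g x₀) / (y - x₀) := hξeq ▸ hξpos
    have hden : 0 < y - x₀ := sub_pos.2 hyx
    rcases div_pos_iff.mp hnum with ⟨h1, _⟩ | ⟨_, h2⟩ <;> linarith
  exact absurd (hmax y ⟨hx.1.trans hyx, hyy.2.2⟩) (not_le.2 hgy)


/-- A positive solution of `-d u'' = u (f - λ u)` on `(0, l)` with `u(0) = 0`,
`u(l) = K`. -/
def IsTruncKSol (d lam l K : ℝ) (f u u' u'' : ℝ → ℝ) : Prop :=
  ContinuousOn u (Icc 0 l) ∧ u 0 = 0 ∧ u l = K ∧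
  (∀ x ∈ Ioo (0:ℝ) l, 0 < u x) ∧
  (∀ x ∈ Ioo (0:ℝ) l, HasDerivAt u (u' x) x) ∧
  (∀ x ∈ Ioo (0:ℝ) l, HasDerivAt u' (u'' x) x) ∧
  (∀ x ∈ Ioo (0:ℝ) l, -(d * u'' x) = u x * (f x - lam * u x))

open Filter Topology in
lemma trunc_bound (d lam l K F f₀ : ℝ) (hd : 0 < d) (hlam : 0 < lam) (hl : 0 < l)
    (hf₀ : 0 < f₀) (f u u' u'' : ℝ → ℝ)
    (hf_lb : ∀ x ∈ Ici (0:ℝ), f₀ ≤ f x) (hf_ub : ∀ x ∈ Ici (0:ℝ), f x ≤ F)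
    (hK : F / lam < K) (hu : IsTruncKSol d lam l K f u u' u'') :
    (∀ x ∈ Icc (0:ℝ) l, u x ≤ K) ∧ (∀ x ∈ Ico (0:ℝ) l, u x < K) := by
  obtain ⟨hcont, h0, hlK, hpos, hD1, hD2, hode⟩ := hu
  have hF : 0 < F := lt_of_lt_of_le hf₀ (le_trans (hf_lb 0 self_mem_Ici) (hf_ub 0 self_mem_Ici))
  have hKpos : 0 < K := lt_trans (div_pos hF hlam) hK
  have hFK : F < lam * K := by
    have := (div_lt_iff₀ hlam).mp hK
    linarith
  -- mini lemma
  have mini : ∀ x₀ ∈ Ioo (0:ℝ) l, K ≤ u x₀ → (∀ x ∈ Ioo (0:ℝ) l, u x ≤ u x₀) → False := by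
    intro x₀ hx₀ hKle hmax
    have hupos : 0 < u x₀ := hpos x₀ hx₀
    have hfneg : f x₀ - lam * u x₀ < 0 := by
      have := hf_ub x₀ (le_of_lt hx₀.1 : (0:ℝ) ≤ x₀)
      nlinarith
    have hrhs : u x₀ * (f x₀ - lam * u x₀) < 0 := mul_neg_of_pos_of_neg hupos hfneg
    have h2pos : 0 < u'' x₀ := by
      have := hode x₀ hx₀
      nlinarith
    exact no_interior_max u u' 0 l x₀ (u'' x₀) hx₀ hD1 (hD2 x₀ hx₀) h2pos hmax
  have hle : ∀ x ∈ Icc (0:ℝ) l, u x ≤ K := by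
    obtain ⟨x₀, hx₀mem, hx₀max⟩ := isCompact_Icc.exists_isMaxOn (nonempty_Icc.2 (le_of_lt hl)) hcont
    intro x hx
    by_contra hxK
    push_neg at hxK
    have hx₀K : K < u x₀ := lt_of_lt_of_le hxK (hx₀max hx)
    have hx₀0 : x₀ ≠ 0 := by intro h; rw [h, h0] at hx₀K; linarith
    have hx₀l : x₀ ≠ l := by intro h; rw [h, hlK] at hx₀K; linarith
    have hx₀Ioo : x₀ ∈ Ioo (0:ℝ) l := ⟨lt_of_le_of_ne hx₀mem.1 (Ne.symm hx₀0), lt_of_le_of_ne hx₀mem.2 hx₀l⟩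
    exact mini x₀ hx₀Ioo (le_of_lt hx₀K) (fun y hy => hx₀max (Ioo_subset_Icc_self hy))
  refine ⟨hle, fun x hx => ?_⟩
  rcases eq_or_lt_of_le hx.1 with h0x | h0x
  · rw [← h0x, h0]; exact hKpos
  by_contra hxK
  push_neg at hxK
  have hxIoo : x ∈ Ioo (0:ℝ) l := ⟨h0x, hx.2⟩
  exact mini x hxIoo hxK (fun y hy => le_trans (hle y (Ioo_subset_Icc_self hy)) hxK)


open Filter Topology in
lemma hat_bound (d lam F f₀ : ℝ) (hd : 0 < d) (hlam : 0 < lam) (hf₀ : 0 < f₀)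
    (f : ℝ → ℝ)
    (hf_lb : ∀ x ∈ Ici (0:ℝ), f₀ ≤ f x) (hf_ub : ∀ x ∈ Ici (0:ℝ), f x ≤ F)
    (uhat uhat' uhat'' : ℝ → ℝ)
    (hhat_cont : ContinuousOn uhat (Ici 0)) (hhat0 : uhat 0 = 0)
    (B : ℝ) (hhat_bdd : ∀ x ∈ Ici (0:ℝ), uhat x ≤ B)
    (hhat' : ∀ x ∈ Ioi (0:ℝ), HasDerivAt uhat (uhat' x) x)
    (hhat'' : ∀ x ∈ Ioi (0:ℝ), HasDerivAt uhat' (uhat'' x) x)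
    (hhat_ode : ∀ x ∈ Ioi (0:ℝ), -(d * uhat'' x) = uhat x * (f x - lam * uhat x)) :
    ∀ x ∈ Ici (0:ℝ), uhat x ≤ F / lam := by
  set c := F / lam with hc
  have hF : 0 < F := lt_of_lt_of_le hf₀ (le_trans (hf_lb 0 self_mem_Ici) (hf_ub 0 self_mem_Ici))
  have hcpos : 0 < c := div_pos hF hlam
  have hlamc : lam * c = F := by rw [hc]; field_simp
  by_contra hcon
  push_neg at hcon
  obtain ⟨x₀, hx₀mem, hx₀⟩ := hcon
  have hx₀pos : 0 < x₀ := by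
    rcases eq_or_lt_of_le (mem_Ici.mp hx₀mem) with h | h
    · exfalso; rw [← h, hhat0] at hx₀; linarith
    · exact h
  -- convexity where uhat > c
  have hconv : ∀ x : ℝ, 0 < x → c < uhat x → 0 < uhat'' x := by
    intro x hx hcx
    have hfx : f x ≤ F := hf_ub x (le_of_lt hx)
    have h1 : 0 < uhat x := lt_trans hcpos hcx
    have h2 : f x - lam * uhat x < 0 := by nlinarith [mul_lt_mul_of_pos_left hcx hlam]
    have hneg : uhat x * (f x - lam * uhat x) < 0 := mul_neg_of_pos_of_neg h1 h2
    have := hhat_ode x hx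
    nlinarith
  -- the last crossing point before x₀
  set S : Set ℝ := Icc 0 x₀ ∩ uhat ⁻¹' (Iic c) with hS
  have hScl : IsClosed S :=
    (hhat_cont.mono (Icc_subset_Ici_self)).preimage_isClosed_of_isClosed isClosed_Icc isClosed_Iic
  have hSne : S.Nonempty := ⟨0, ⟨le_rfl, le_of_lt hx₀pos⟩, by simp [hhat0, le_of_lt hcpos]⟩
  have hSbdd : BddAbove S := BddAbove.mono (inter_subset_left) bddAbove_Icc
  set a := sSup S with ha
  have haS : a ∈ S := hScl.csSup_mem hSne hSbdd
  have hac : uhat a ≤ c := haS.2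
  have ha0 : 0 ≤ a := haS.1.1
  have hax₀ : a < x₀ := lt_of_le_of_ne haS.1.2 (by intro h; rw [h] at haS; exact absurd haS.2 (not_le.2 hx₀))
  have hgt : ∀ x : ℝ, a < x → x ≤ x₀ → c < uhat x := by
    intro x h1 h2
    by_contra hle
    push_neg at hle
    exact absurd (le_csSup hSbdd (⟨⟨le_trans ha0 (le_of_lt h1), h2⟩, hle⟩ : x ∈ S)) (not_le.2 h1)
  by_cases hcase : ∃ b, x₀ < b ∧ uhat b ≤ c
  · -- case 1: comes back below c
    obtain ⟨b₀, hb₀, hb₀le⟩ := hcase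
    set T : Set ℝ := Icc x₀ b₀ ∩ uhat ⁻¹' (Iic c) with hT
    have hTcl : IsClosed T :=
      (hhat_cont.mono (fun z hz => le_trans (le_of_lt hx₀pos) hz.1)).preimage_isClosed_of_isClosed isClosed_Icc isClosed_Iic
    have hTne : T.Nonempty := ⟨b₀, ⟨le_of_lt hb₀, le_rfl⟩, hb₀le⟩
    have hTbdd : BddBelow T := BddBelow.mono (inter_subset_left) bddBelow_Icc
    set b := sInf T with hb
    have hbT : b ∈ T := hTcl.csInf_mem hTne hTbdd
    have hx₀b : x₀ < b := lt_of_le_of_ne hbT.1.1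
      (by intro h; rw [← h] at hbT; exact absurd hbT.2 (not_le.2 hx₀))
    have hgt2 : ∀ x : ℝ, x₀ ≤ x → x < b → c < uhat x := by
      intro x h1 h2
      by_contra hle
      push_neg at hle
      exact absurd (csInf_le hTbdd (⟨⟨h1, le_trans (le_of_lt h2) hbT.1.2⟩, hle⟩ : x ∈ T)) (not_le.2 h2)
    have hab : a < b := lt_trans hax₀ hx₀b
    have hgtab : ∀ x : ℝ, a < x → x < b → c < uhat x := by
      intro x h1 h2
      rcases le_or_gt x x₀ with h | h
      · exact hgt x h1 h
      · exact hgt2 x (le_of_lt h) h2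
    -- max on [a,b]
    obtain ⟨m, hmmem, hmmax⟩ := isCompact_Icc.exists_isMaxOn (nonempty_Icc.2 (le_of_lt hab))
      (hhat_cont.mono (fun z hz => le_trans ha0 hz.1))
    have hmc : c < uhat m := lt_of_lt_of_le hx₀ (hmmax ⟨le_of_lt hax₀, le_of_lt hx₀b⟩)
    have hma : m ≠ a := by intro h; rw [h] at hmc; exact absurd haS.2 (not_le.2 hmc)
    have hmb : m ≠ b := by intro h; rw [h] at hmc; exact absurd hbT.2 (not_le.2 hmc)
    have hmIoo : m ∈ Ioo a b := ⟨lt_of_le_of_ne hmmem.1 (Ne.symm hma), lt_of_le_of_ne hmmem.2 hmb⟩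
    have hmpos : 0 < m := lt_of_le_of_lt ha0 hmIoo.1
    exact no_interior_max uhat uhat' a b m (uhat'' m) hmIoo
      (fun z hz => hhat' z (lt_of_le_of_lt ha0 hz.1))
      (hhat'' m hmpos) (hconv m hmpos hmc)
      (fun z hz => hmmax (Ioo_subset_Icc_self hz))
  · -- case 2: uhat > c on (a, ∞), grows linearly, contradicting boundedness
    push_neg at hcase
    have hall : ∀ x : ℝ, a < x → c < uhat x := by
      intro x h1
      rcases le_or_gt x x₀ with h | h
      · exact hgt x h1 h
      · exact hcase x h
    -- MVT on [a, x₀] gives a point with positive derivative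
    obtain ⟨ξ, hξ, hξeq⟩ := exists_hasDerivAt_eq_slope uhat uhat' hax₀
      (hhat_cont.mono (fun z hz => le_trans ha0 hz.1))
      (fun z hz => hhat' z (lt_of_le_of_lt ha0 hz.1))
    have hξpos : 0 < ξ := lt_of_le_of_lt ha0 hξ.1
    have hppos : 0 < (uhat' ξ) := by
      rw [hξeq]
      apply div_pos (by linarith [hac, hx₀] : (0:ℝ) < uhat x₀ - uhat a) (by linarith)
    -- uhat' ≥ (uhat' ξ) for x ≥ ξ
    have hmono : ∀ x : ℝ, ξ < x → (uhat' ξ) ≤ uhat' x := by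
      intro x hx
      obtain ⟨η, hη, hηeq⟩ := exists_hasDerivAt_eq_slope uhat' uhat'' hx
        (fun z hz => (hhat'' z (lt_of_lt_of_le hξpos hz.1)).continuousAt.continuousWithinAt)
        (fun z hz => hhat'' z (lt_trans hξpos hz.1))
      have hηc : 0 < uhat'' η := hconv η (lt_trans hξpos hη.1)
        (hall η (lt_trans hξ.1 hη.1))
      rw [hηeq] at hηc
      rcases div_pos_iff.mp hηc with ⟨h1, _⟩ | ⟨_, h2⟩ <;> [skip; linarith]
      linarith
    -- uhat grows at least linearly
    have hgrow : ∀ x : ℝ, ξ < x → uhat ξ + (uhat' ξ) * (x - ξ) ≤ uhat x := by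
      intro x hx
      obtain ⟨ζ, hζ, hζeq⟩ := exists_hasDerivAt_eq_slope uhat uhat' hx
        (fun z hz => (hhat' z (lt_of_lt_of_le hξpos hz.1)).continuousAt.continuousWithinAt)
        (fun z hz => hhat' z (lt_trans hξpos hz.1))
      have := hmono ζ hζ.1
      rw [hζeq] at this
      have hdx : 0 < x - ξ := sub_pos.2 hx
      have := (le_div_iff₀ hdx).mp this
      linarith
    -- contradiction with boundedness
    set X := ξ + (B - uhat ξ) / (uhat' ξ) + 1 with hX
    have hBξ : uhat ξ ≤ B := hhat_bdd ξ (le_of_lt hξpos)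
    have hXgt : ξ < X := by
      have : 0 ≤ (B - uhat ξ) / (uhat' ξ) := div_nonneg (by linarith) (le_of_lt hppos)
      rw [hX]; linarith
    have h1 := hgrow X hXgt
    have h2 : uhat X ≤ B := hhat_bdd X (le_of_lt (lt_trans hξpos hXgt))
    have h3 : (uhat' ξ) * (X - ξ) = (B - uhat ξ) + (uhat' ξ) := by
      rw [hX]; field_simp; ring
    linarith


open Filter Topology in
lemma comparison (d lam l F f₀ : ℝ) (hd : 0 < d) (hlam : 0 < lam) (hl : 0 < l)
    (hf₀ : 0 < f₀) (f : ℝ → ℝ)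
    (hf_lb : ∀ x ∈ Ici (0:ℝ), f₀ ≤ f x) (hf_ub : ∀ x ∈ Ici (0:ℝ), f x ≤ F)
    (u u' u'' v v' v'' : ℝ → ℝ)
    (hu_cont : ContinuousOn u (Icc 0 l)) (hu0 : u 0 = 0)
    (hu_pos : ∀ x ∈ Ioo (0:ℝ) l, 0 < u x)
    (hu' : ∀ x ∈ Ioo (0:ℝ) l, HasDerivAt u (u' x) x)
    (hu'' : ∀ x ∈ Ioo (0:ℝ) l, HasDerivAt u' (u'' x) x)
    (hu_ode : ∀ x ∈ Ioo (0:ℝ) l, -(d * u'' x) = u x * (f x - lam * u x))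
    (hv_cont : ContinuousOn v (Icc 0 l)) (hv0 : v 0 = 0)
    (hv_pos : ∀ x ∈ Ioo (0:ℝ) l, 0 < v x)
    (hv' : ∀ x ∈ Ioo (0:ℝ) l, HasDerivAt v (v' x) x)
    (hv'' : ∀ x ∈ Ioo (0:ℝ) l, HasDerivAt v' (v'' x) x)
    (hv_ode : ∀ x ∈ Ioo (0:ℝ) l, -(d * v'' x) = v x * (f x - lam * v x))
    (hbd : v l < u l) :
    ∀ x ∈ Icc (0:ℝ) l, v x ≤ u x := by
  by_contra hcon
  push_neg at hcon
  obtain ⟨x₁, hx₁mem, hx₁⟩ := hcon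
  set g : ℝ → ℝ := fun x => v x - u x with hg
  have hg_cont : ContinuousOn g (Icc 0 l) := hv_cont.sub hu_cont
  have hx₁0 : 0 < x₁ := by
    rcases eq_or_lt_of_le hx₁mem.1 with h | h
    · exfalso; rw [← h, hu0, hv0] at hx₁; exact lt_irrefl _ hx₁
    · exact h
  have hx₁l : x₁ < l := by
    rcases eq_or_lt_of_le hx₁mem.2 with h | h
    · exfalso; rw [h] at hx₁; linarith
    · exact h
  -- a : last point before x₁ with v ≤ u
  set Sa : Set ℝ := Icc 0 x₁ ∩ g ⁻¹' (Iic 0) with hSa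
  have hSacl : IsClosed Sa :=
    (hg_cont.mono (Icc_subset_Icc_right (le_of_lt hx₁l))).preimage_isClosed_of_isClosed
      isClosed_Icc isClosed_Iic
  have hSane : Sa.Nonempty := ⟨0, ⟨le_rfl, le_of_lt hx₁0⟩, by simp [hg, hu0, hv0]⟩
  set a := sSup Sa with ha
  have haSa : a ∈ Sa := hSacl.csSup_mem hSane (BddAbove.mono inter_subset_left bddAbove_Icc)
  have ha0 : 0 ≤ a := haSa.1.1
  have hga : g a ≤ 0 := haSa.2
  have hax₁ : a < x₁ := lt_of_le_of_ne haSa.1.2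
    (by intro h; rw [h] at hga; simp only [hg] at hga; linarith)
  have hva : ∀ x : ℝ, a < x → x ≤ x₁ → 0 < g x := by
    intro x h1 h2
    by_contra hle
    push_neg at hle
    exact absurd (le_csSup (BddAbove.mono inter_subset_left bddAbove_Icc)
      (⟨⟨le_trans ha0 (le_of_lt h1), h2⟩, hle⟩ : x ∈ Sa)) (not_le.2 h1)
  -- b : first point after x₁ with v ≤ u
  set Sb : Set ℝ := Icc x₁ l ∩ g ⁻¹' (Iic 0) with hSb
  have hSbcl : IsClosed Sb :=
    (hg_cont.mono (Icc_subset_Icc_left (le_of_lt hx₁0))).preimage_isClosed_of_isClosed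
      isClosed_Icc isClosed_Iic
  have hSbne : Sb.Nonempty := ⟨l, ⟨le_of_lt hx₁l, le_rfl⟩, by simp only [hg, mem_preimage, mem_Iic]; linarith⟩
  set b := sInf Sb with hb
  have hbSb : b ∈ Sb := hSbcl.csInf_mem hSbne (BddBelow.mono inter_subset_left bddBelow_Icc)
  have hgb : g b ≤ 0 := hbSb.2
  have hbl : b ≤ l := hbSb.1.2
  have hx₁b : x₁ < b := lt_of_le_of_ne hbSb.1.1
    (by intro h; rw [← h] at hgb; simp only [hg] at hgb; linarith)
  have hvb : ∀ x : ℝ, x₁ ≤ x → x < b → 0 < g x := by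
    intro x h1 h2
    by_contra hle
    push_neg at hle
    exact absurd (csInf_le (BddBelow.mono inter_subset_left bddBelow_Icc)
      (⟨⟨h1, le_trans (le_of_lt h2) hbl⟩, hle⟩ : x ∈ Sb)) (not_le.2 h2)
  have hvab : ∀ x : ℝ, a < x → x < b → 0 < g x := by
    intro x h1 h2
    rcases le_or_gt x x₁ with h | h
    · exact hva x h1 h
    · exact hvb x (le_of_lt h) h2
  -- g b = 0 via left limit, hence b < l
  have hIoosub : Ioo x₁ b ⊆ Icc 0 l := fun z hz =>
    ⟨le_of_lt (lt_trans hx₁0 hz.1), le_trans (le_of_lt hz.2) hbl⟩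
  haveI hnbb : (𝓝[Ioo x₁ b] b).NeBot := by
    rw [← mem_closure_iff_nhdsWithin_neBot, closure_Ioo (ne_of_lt hx₁b)]
    exact ⟨le_of_lt hx₁b, le_rfl⟩
  have hgb0 : g b = 0 := by
    have htend : Tendsto g (𝓝[Ioo x₁ b] b) (𝓝 (g b)) :=
      ((hg_cont b ⟨le_of_lt (lt_trans hx₁0 hx₁b), hbl⟩).mono hIoosub).tendsto
    have hge : 0 ≤ g b := ge_of_tendsto htend
      (eventually_nhdsWithin_of_forall (fun z hz => le_of_lt (hvb z (le_of_lt hz.1) hz.2)))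
    linarith
  have hblt : b < l := by
    rcases eq_or_lt_of_le hbl with h | h
    · exfalso; rw [h] at hgb0; simp only [hg] at hgb0; linarith
    · exact h
  -- g a = 0 via right limit
  haveI hnba : (𝓝[Ioo a x₁] a).NeBot := by
    rw [← mem_closure_iff_nhdsWithin_neBot, closure_Ioo (ne_of_lt hax₁)]
    exact ⟨le_rfl, le_of_lt hax₁⟩
  have hIoosub' : Ioo a x₁ ⊆ Icc 0 l := fun z hz =>
    ⟨le_trans ha0 (le_of_lt hz.1), le_of_lt (lt_trans hz.2 hx₁l)⟩
  have hga0 : g a = 0 := by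
    have htend : Tendsto g (𝓝[Ioo a x₁] a) (𝓝 (g a)) :=
      ((hg_cont a ⟨ha0, le_of_lt (lt_trans hax₁ hx₁l)⟩).mono hIoosub').tendsto
    have hge : 0 ≤ g a := ge_of_tendsto htend
      (eventually_nhdsWithin_of_forall (fun z hz => le_of_lt (hva z hz.1 (le_of_lt hz.2))))
    linarith
  have habsub : Ioo a b ⊆ Ioo 0 l := fun z hz =>
    ⟨lt_of_le_of_lt ha0 hz.1, lt_of_lt_of_le hz.2 (le_of_lt hblt)⟩
  have hbIoo : b ∈ Ioo (0:ℝ) l := ⟨lt_trans hx₁0 hx₁b, hblt⟩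
  -- the Wronskian
  set W : ℝ → ℝ := fun x => u x * v' x - v x * u' x with hW
  have hWd : ∀ x ∈ Ioo (0:ℝ) l, HasDerivAt W (u x * v'' x - v x * u'' x) x := by
    intro x hx
    have h1 := ((hu' x hx).mul (hv'' x hx)).sub ((hv' x hx).mul (hu'' x hx))
    exact h1.congr_deriv (by ring)
  have hWpos : ∀ x ∈ Ioo a b, 0 < u x * v'' x - v x * u'' x := by
    intro x hx
    have hx' : x ∈ Ioo (0:ℝ) l := habsub hx
    have h1 : d * u'' x = -(u x * (f x - lam * u x)) := by linarith [hu_ode x hx']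
    have h2 : d * v'' x = -(v x * (f x - lam * v x)) := by linarith [hv_ode x hx']
    have key : d * (u x * v'' x - v x * u'' x) = lam * (u x * v x) * (v x - u x) := by
      calc d * (u x * v'' x - v x * u'' x)
          = u x * (d * v'' x) - v x * (d * u'' x) := by ring
        _ = u x * (-(v x * (f x - lam * v x))) - v x * (-(u x * (f x - lam * u x))) := by
            rw [h1, h2]
        _ = lam * (u x * v x) * (v x - u x) := by ring
    have hgx : 0 < v x - u x := hvab x hx.1 hx.2
    have hupos := hu_pos x hx'
    have hvpos := hv_pos x hx'
    have hrhs : 0 < lam * (u x * v x) * (v x - u x) := by positivity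
    nlinarith [key, hd]
  have hWmono : StrictMonoOn W (Ioc a b) := by
    apply strictMonoOn_of_deriv_pos (convex_Ioc a b)
    · intro x hx
      have hx' : x ∈ Ioo (0:ℝ) l := ⟨lt_of_le_of_lt ha0 hx.1, lt_of_le_of_lt hx.2 hblt⟩
      exact (hWd x hx').continuousAt.continuousWithinAt
    · intro x hx
      rw [interior_Ioc] at hx
      rw [(hWd x (habsub hx)).deriv]
      exact hWpos x hx
  -- W b ≤ 0
  have hgd : ∀ x ∈ Ioo (0:ℝ) l, HasDerivAt g (v' x - u' x) x :=
    fun x hx => (hv' x hx).sub (hu' x hx)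
  have hWb : W b ≤ 0 := by
    have hslope : Tendsto (slope g b) (𝓝[Ioo x₁ b] b) (𝓝 (v' b - u' b)) :=
      (hasDerivAt_iff_tendsto_slope.mp (hgd b hbIoo)).mono_left
        (nhdsWithin_mono _ (fun y hy => ne_of_lt hy.2))
    have hle : v' b - u' b ≤ 0 := by
      refine le_of_tendsto hslope (eventually_nhdsWithin_of_forall (fun z hz => ?_))
      rw [slope_def_field, hgb0]
      have h1 : 0 ≤ g z := le_of_lt (hvb z (le_of_lt hz.1) hz.2)
      have h2 : z - b ≤ 0 := by linarith [hz.2]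
      have : (g z - 0) / (z - b) ≤ 0 := div_nonpos_iff.mpr (Or.inl ⟨by linarith, h2⟩)
      simpa [div_eq_mul_inv] using this
    have hub : v b = u b := by simp only [hg] at hgb0; linarith
    have hubpos : 0 < u b := hu_pos b hbIoo
    have : W b = u b * (v' b - u' b) := by simp only [hW]; rw [hub]; ring
    rw [this]
    exact mul_nonpos_of_nonneg_of_nonpos (le_of_lt hubpos) hle
  have hx₁Ioc : x₁ ∈ Ioc a b := ⟨hax₁, le_of_lt hx₁b⟩
  have hbIoc : b ∈ Ioc a b := ⟨lt_trans hax₁ hx₁b, le_rfl⟩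
  have hWx₁b : W x₁ < W b := hWmono hx₁Ioc hbIoc hx₁b
  have hWx₁ : 0 ≤ W x₁ := by
    rcases eq_or_lt_of_le ha0 with haz | hapos
    · -- a = 0 : use the limit of W at 0
      obtain ⟨Cu, hCu⟩ := isCompact_Icc.exists_bound_of_continuousOn hu_cont
      obtain ⟨Cv, hCv⟩ := isCompact_Icc.exists_bound_of_continuousOn hv_cont
      have hCu0 : 0 ≤ Cu := le_trans (norm_nonneg _) (hCu 0 ⟨le_rfl, le_of_lt hl⟩)
      have hCv0 : 0 ≤ Cv := le_trans (norm_nonneg _) (hCv 0 ⟨le_rfl, le_of_lt hl⟩)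
      have hF : 0 < F := lt_of_lt_of_le hf₀
        (le_trans (hf_lb 0 self_mem_Ici) (hf_ub 0 self_mem_Ici))
      -- second derivative bounds
      have habs2 : ∀ (w w2 : ℝ → ℝ) (Cw : ℝ), 0 ≤ Cw →
          (∀ x ∈ Icc (0:ℝ) l, ‖w x‖ ≤ Cw) →
          (∀ x ∈ Ioo (0:ℝ) l, -(d * w2 x) = w x * (f x - lam * w x)) →
          ∀ x ∈ Ioo (0:ℝ) l, |w2 x| ≤ Cw * (F + lam * Cw) / d := by
        intro w w2 Cw hCw0 hCw hode x hx
        have h1 : d * w2 x = -(w x * (f x - lam * w x)) := by linarith [hode x hx]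
        have hfx : |f x| ≤ F := by
          rw [abs_of_pos (lt_of_lt_of_le hf₀ (hf_lb x (le_of_lt hx.1)))]
          exact hf_ub x (le_of_lt hx.1)
        have hwx : |w x| ≤ Cw := hCw x (Ioo_subset_Icc_self hx)
        have h2 : |f x - lam * w x| ≤ F + lam * Cw := by
          calc |f x - lam * w x| ≤ |f x| + |lam * w x| := abs_sub _ _
            _ ≤ F + lam * Cw := by
                rw [abs_mul, abs_of_pos hlam]
                exact add_le_add hfx (mul_le_mul_of_nonneg_left hwx (le_of_lt hlam))
        have h3 : |d * w2 x| ≤ Cw * (F + lam * Cw) := by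
          rw [h1, abs_neg, abs_mul]
          exact mul_le_mul hwx h2 (abs_nonneg _) hCw0
        rw [abs_mul, abs_of_pos hd] at h3
        rw [le_div_iff₀ hd]
        linarith [h3]
      have hbu := habs2 u u'' Cu hCu0 hCu hu_ode
      have hbv := habs2 v v'' Cv hCv0 hCv hv_ode
      set C2u := Cu * (F + lam * Cu) / d with hC2u
      set C2v := Cv * (F + lam * Cv) / d with hC2v
      have hC2u0 : 0 ≤ C2u := le_trans (abs_nonneg _) (hbu x₁ ⟨hx₁0, hx₁l⟩)
      have hC2v0 : 0 ≤ C2v := le_trans (abs_nonneg _) (hbv x₁ ⟨hx₁0, hx₁l⟩)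
      -- first derivative bounds near 0
      have habs1 : ∀ (w w' w2 : ℝ → ℝ) (C2 : ℝ), 0 ≤ C2 →
          (∀ x ∈ Ioo (0:ℝ) l, HasDerivAt w (w' x) x) →
          (∀ x ∈ Ioo (0:ℝ) l, HasDerivAt w' (w2 x) x) →
          (∀ x ∈ Ioo (0:ℝ) l, |w2 x| ≤ C2) →
          ∀ x ∈ Ioo (0:ℝ) x₁, |w' x| ≤ |w' x₁| + C2 * l := by
        intro w w' w2 C2 hC20 hw hw2 hb x hx
        have hsub : Icc x x₁ ⊆ Ioo 0 l := fun z hz =>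
          ⟨lt_of_lt_of_le hx.1 hz.1, lt_of_le_of_lt hz.2 hx₁l⟩
        obtain ⟨ξ, hξ, hξeq⟩ := exists_hasDerivAt_eq_slope w' w2 hx.2
          (fun z hz => (hw2 z (hsub hz)).continuousAt.continuousWithinAt)
          (fun z hz => hw2 z (hsub (Ioo_subset_Icc_self hz)))
        have hne : (x₁ - x) ≠ 0 := ne_of_gt (by linarith [hx.2])
        have hd1 : w' x₁ - w' x = w2 ξ * (x₁ - x) := by
          rw [hξeq, div_mul_cancel₀ _ hne]
        have hξb : |w2 ξ| ≤ C2 := hb ξ (hsub (Ioo_subset_Icc_self hξ))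
        have h5 : |w' x₁ - w' x| ≤ C2 * l := by
          rw [hd1, abs_mul]
          have h6 : |x₁ - x| ≤ l := by
            rw [abs_of_pos (by linarith [hx.2] : (0:ℝ) < x₁ - x)]
            linarith [hx.1, hx₁l]
          exact mul_le_mul hξb h6 (abs_nonneg _) hC20
        calc |w' x| = |w' x₁ - (w' x₁ - w' x)| := by ring_nf
          _ ≤ |w' x₁| + |w' x₁ - w' x| := abs_sub _ _
          _ ≤ |w' x₁| + C2 * l := by linarith
      have hMu := habs1 u u' u'' C2u hC2u0 hu' hu'' hbu
      have hMv := habs1 v v' v'' C2v hC2v0 hv' hv'' hbv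
      set Mu := |u' x₁| + C2u * l with hMudef
      set Mv := |v' x₁| + C2v * l with hMvdef
      -- the squeeze
      haveI hnb0 : (𝓝[Ioo (0:ℝ) x₁] (0:ℝ)).NeBot := by
        rw [← mem_closure_iff_nhdsWithin_neBot, closure_Ioo (ne_of_lt hx₁0)]
        exact ⟨le_rfl, le_of_lt hx₁0⟩
      have hsub01 : Ioo (0:ℝ) x₁ ⊆ Icc 0 l := fun z hz =>
        ⟨le_of_lt hz.1, le_of_lt (lt_trans hz.2 hx₁l)⟩
      have htu : Tendsto (fun z => |u z|) (𝓝[Ioo (0:ℝ) x₁] 0) (𝓝 0) := by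
        have : Tendsto u (𝓝[Ioo (0:ℝ) x₁] 0) (𝓝 0) := by
          have h : Tendsto u (𝓝[Ioo (0:ℝ) x₁] 0) (𝓝 (u 0)) :=
            (hu_cont 0 ⟨le_rfl, le_of_lt hl⟩).mono hsub01
          rwa [hu0] at h
        simpa using this.abs
      have htv : Tendsto (fun z => |v z|) (𝓝[Ioo (0:ℝ) x₁] 0) (𝓝 0) := by
        have : Tendsto v (𝓝[Ioo (0:ℝ) x₁] 0) (𝓝 0) := by
          have h : Tendsto v (𝓝[Ioo (0:ℝ) x₁] 0) (𝓝 (v 0)) :=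
            (hv_cont 0 ⟨le_rfl, le_of_lt hl⟩).mono hsub01
          rwa [hv0] at h
        simpa using this.abs
      have htbound : Tendsto (fun z => |u z| * Mv + |v z| * Mu) (𝓝[Ioo (0:ℝ) x₁] 0) (𝓝 0) := by
        have := (htu.mul_const Mv).add (htv.mul_const Mu)
        simpa using this
      have htW : Tendsto W (𝓝[Ioo (0:ℝ) x₁] 0) (𝓝 0) := by
        apply squeeze_zero_norm' _ htbound
        refine eventually_nhdsWithin_of_forall (fun z hz => ?_)
        have hz' : z ∈ Ioo (0:ℝ) l := ⟨hz.1, lt_trans hz.2 hx₁l⟩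
        have h1 : ‖W z‖ = |u z * v' z - v z * u' z| := rfl
        calc ‖W z‖ = |u z * v' z - v z * u' z| := rfl
          _ ≤ |u z * v' z| + |v z * u' z| := abs_sub _ _
          _ = |u z| * |v' z| + |v z| * |u' z| := by rw [abs_mul, abs_mul]
          _ ≤ |u z| * Mv + |v z| * Mu := by
              have := hMv z hz
              have := hMu z hz
              have := abs_nonneg (u z)
              have := abs_nonneg (v z)
              have := abs_nonneg (v' z)
              have := abs_nonneg (u' z)
              nlinarith
      refine le_of_tendsto htW (eventually_nhdsWithin_of_forall (fun z hz => ?_))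
      have hzIoc : z ∈ Ioc a b := ⟨by rw [← haz]; exact hz.1, le_of_lt (lt_trans hz.2 hx₁b)⟩
      exact le_of_lt (hWmono hzIoc hx₁Ioc hz.2)
    · -- a > 0 : W a ≥ 0 and W a ≤ W x₁ by continuity
      have haIoo : a ∈ Ioo (0:ℝ) l := ⟨hapos, lt_trans hax₁ hx₁l⟩
      have hslope : Tendsto (slope g a) (𝓝[Ioo a x₁] a) (𝓝 (v' a - u' a)) :=
        (hasDerivAt_iff_tendsto_slope.mp (hgd a haIoo)).mono_left
          (nhdsWithin_mono _ (fun y hy => ne_of_gt hy.1))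
      have hge : 0 ≤ v' a - u' a := by
        refine ge_of_tendsto hslope (eventually_nhdsWithin_of_forall (fun z hz => ?_))
        rw [slope_def_field, hga0]
        have h1 : 0 ≤ g z := le_of_lt (hva z hz.1 (le_of_lt hz.2))
        have h2 : 0 ≤ z - a := by linarith [hz.1]
        have : 0 ≤ (g z - 0) / (z - a) := div_nonneg (by linarith) h2
        simpa [div_eq_mul_inv] using this
      have hua : v a = u a := by simp only [hg] at hga0; linarith
      have huapos : 0 < u a := hu_pos a haIoo
      have hWa : 0 ≤ W a := by
        have : W a = u a * (v' a - u' a) := by simp only [hW]; rw [hua]; ring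
        rw [this]
        exact mul_nonneg (le_of_lt huapos) hge
      have htW : Tendsto W (𝓝[Ioo a x₁] a) (𝓝 (W a)) :=
        (hWd a haIoo).continuousAt.continuousWithinAt
      have hle : W a ≤ W x₁ := le_of_tendsto htW
        (eventually_nhdsWithin_of_forall (fun z hz =>
          le_of_lt (hWmono ⟨hz.1, le_of_lt (lt_trans hz.2 hx₁b)⟩ hx₁Ioc hz.2)))
      linarith
  linarith

/-- the truncated solutions with boundary value `K > (sup f)/λ`
dominate the half-line solution `û` and are nonincreasing in `l`. -/
theorem stmt7 (d lam K F f₀ : ℝ) (hd : 0 < d) (hlam : 0 < lam) (hf₀ : 0 < f₀)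
    (f : ℝ → ℝ) (hf_cont : ContinuousOn f (Ici 0))
    (hf_lb : ∀ x ∈ Ici (0:ℝ), f₀ ≤ f x) (hf_ub : ∀ x ∈ Ici (0:ℝ), f x ≤ F)
    (hK : F / lam < K)
    (uhat uhat' uhat'' : ℝ → ℝ)
    (hhat_cont : ContinuousOn uhat (Ici 0)) (hhat0 : uhat 0 = 0)
    (hhat_pos : ∀ x ∈ Ioi (0:ℝ), 0 < uhat x)
    (B : ℝ) (hhat_bdd : ∀ x ∈ Ici (0:ℝ), uhat x ≤ B)
    (hhat' : ∀ x ∈ Ioi (0:ℝ), HasDerivAt uhat (uhat' x) x)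
    (hhat'' : ∀ x ∈ Ioi (0:ℝ), HasDerivAt uhat' (uhat'' x) x)
    (hhat_ode : ∀ x ∈ Ioi (0:ℝ), -(d * uhat'' x) = uhat x * (f x - lam * uhat x)) :
    (∀ l, 0 < l → ∀ u u' u'', IsTruncKSol d lam l K f u u' u'' →
      ∀ x ∈ Icc (0:ℝ) l, uhat x ≤ u x) ∧
    (∀ l₁ l₂, 0 < l₁ → l₁ < l₂ →
      ∀ u₁ u₁' u₁'' u₂ u₂' u₂'', IsTruncKSol d lam l₁ K f u₁ u₁' u₁'' →
        IsTruncKSol d lam l₂ K f u₂ u₂' u₂'' →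
        ∀ x ∈ Icc (0:ℝ) l₁, u₂ x ≤ u₁ x) := by
  constructor
  · intro l hl u u' u'' hu
    obtain ⟨hcont, h0, hlK, hpos, hD1, hD2, hode⟩ := hu
    have hhatl : uhat l ≤ F / lam :=
      hat_bound d lam F f₀ hd hlam hf₀ f hf_lb hf_ub uhat uhat' uhat'' hhat_cont hhat0
        B hhat_bdd hhat' hhat'' hhat_ode l (le_of_lt hl)
    exact comparison d lam l F f₀ hd hlam hl hf₀ f hf_lb hf_ub
      u u' u'' uhat uhat' uhat''
      hcont h0 hpos hD1 hD2 hode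
      (hhat_cont.mono (Icc_subset_Ici_self)) hhat0
      (fun x hx => hhat_pos x hx.1)
      (fun x hx => hhat' x hx.1) (fun x hx => hhat'' x hx.1)
      (fun x hx => hhat_ode x hx.1)
      (by rw [hlK]; exact lt_of_le_of_lt hhatl hK)
  · intro l₁ l₂ hl₁ hl12 u₁ u₁' u₁'' u₂ u₂' u₂'' hu₁ hu₂
    have hbd : u₂ l₁ < K :=
      (trunc_bound d lam l₂ K F f₀ hd hlam (lt_trans hl₁ hl12) hf₀ f u₂ u₂' u₂''
        hf_lb hf_ub hK hu₂).2 l₁ ⟨le_of_lt hl₁, hl12⟩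
    obtain ⟨hcont₁, h0₁, hlK₁, hpos₁, hD1₁, hD2₁, hode₁⟩ := hu₁
    obtain ⟨hcont₂, h0₂, hlK₂, hpos₂, hD1₂, hD2₂, hode₂⟩ := hu₂
    have hsub : Icc (0:ℝ) l₁ ⊆ Icc (0:ℝ) l₂ := Icc_subset_Icc_right (le_of_lt hl12)
    have hsubo : Ioo (0:ℝ) l₁ ⊆ Ioo (0:ℝ) l₂ := Ioo_subset_Ioo_right (le_of_lt hl12)
    exact comparison d lam l₁ F f₀ hd hlam hl₁ hf₀ f hf_lb hf_ub
      u₁ u₁' u₁'' u₂ u₂' u₂''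
      hcont₁ h0₁ hpos₁ hD1₁ hD2₁ hode₁
      (hcont₂.mono hsub) h0₂
      (fun x hx => hpos₂ x (hsubo hx))
      (fun x hx => hD1₂ x (hsubo hx)) (fun x hx => hD2₂ x (hsubo hx))
      (fun x hx => hode₂ x (hsubo hx))
      (by rw [hlK₁]; exact hbd)
end
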